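/- arXiv:math/0502480 — 5 statements merged into one kernel-verified Lean document; each statement's English description precedes it below -/
import Mathlib

section
/- With the notation of the chart φ_{L₀,L₁} on the Lagrangian Grassmannian: for a lagrangian L complementary to L₁ with graph operator S : L₀ → L₁, the pair (L, L₀) is a Fredholm pair if and only if the self-adjoint operator P_{L₀} J S on L₀ is Fredholm. -/
variable {H : Type*} [NormedAddCommGroup H] [InnerProductSpace ℝ H] [CompleteSpace H]

/-- A bounded operator is Fredholm if it has finite-dimensional kernel, closed range,
and finite-dimensional cokernel. -/
def IsFredholm {X Y : Type*} [NormedAddCommGroup X] [NormedAddCommGroup Y]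
    [NormedSpace ℝ X] [NormedSpace ℝ Y] (T : X →L[ℝ] Y) : Prop :=
  FiniteDimensional ℝ (LinearMap.ker (T : X →ₗ[ℝ] Y)) ∧ IsClosed (LinearMap.range (T : X →ₗ[ℝ] Y) : Set Y) ∧
    FiniteDimensional ℝ (Y ⧸ LinearMap.range (T : X →ₗ[ℝ] Y))

/-- Let `L₁` be a lagrangian complementary to the lagrangian `L₀` and `L` a lagrangian
complementary to `L₁` with graph operator `S : L₀ → L₁`.  Then `(L, L₀)` is a Fredholm
pair if and only if the operator `P_{L₀} J S` on `L₀` is Fredholm. -/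
theorem fredholm_pair_iff_chart_fredholm (J : H →L[ℝ] H)
    (hJ2 : J ∘L J = -1) (hJadj : ContinuousLinearMap.adjoint J = -J)
    (L₀ L₁ L : Submodule ℝ H)
    (hL₀c : IsClosed (L₀ : Set H))
    (hL₀ : L₀.map (J : H →ₗ[ℝ] H) = L₀ᗮ) (hL₁ : L₁.map (J : H →ₗ[ℝ] H) = L₁ᗮ)
    (hL : L.map (J : H →ₗ[ℝ] H) = Lᗮ)
    (hcompl₁ : L₀ ⊓ L₁ = ⊥) (hcompl₂ : L₀ ⊔ L₁ = ⊤)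
    (hcompl₃ : L ⊓ L₁ = ⊥) (hcompl₄ : L ⊔ L₁ = ⊤)
    (S : ↥L₀ →L[ℝ] H) (hSrange : ∀ u : ↥L₀, S u ∈ L₁)
    (hgraph : L = LinearMap.range ((L₀.subtypeL + S : ↥L₀ →L[ℝ] H) : ↥L₀ →ₗ[ℝ] H)) :
    haveI := hL₀c.completeSpace_coe
    ((FiniteDimensional ℝ ↥(L ⊓ L₀) ∧ IsClosed ((L ⊔ L₀ : Submodule ℝ H) : Set H) ∧
        FiniteDimensional ℝ ↥((L ⊔ L₀)ᗮ)) ↔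
      IsFredholm ((L₀.orthogonalProjectionOnto) ∘L (J ∘L S))) := by
  haveI : CompleteSpace ↥L₀ := hL₀c.completeSpace_coe
  show (FiniteDimensional ℝ ↥(L ⊓ L₀) ∧ IsClosed ((L ⊔ L₀ : Submodule ℝ H) : Set H) ∧
        FiniteDimensional ℝ ↥((L ⊔ L₀)ᗮ)) ↔
      IsFredholm ((L₀.orthogonalProjectionOnto) ∘L (J ∘L S))
  set P : H →L[ℝ] ↥L₀ := L₀.orthogonalProjectionOnto with hPdef
  set T : ↥L₀ →L[ℝ] ↥L₀ := P ∘L (J ∘L S) with hTdef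
  -- basic facts about J
  have hJJ : ∀ x : H, J (J x) = -x := by
    intro x
    have := ContinuousLinearMap.ext_iff.mp hJ2 x
    simpa using this
  have hJinj : Function.Injective J := by
    intro x y h
    have := congrArg J h
    rwa [hJJ, hJJ, neg_inj] at this
  have hJsurj : Function.Surjective J := by
    intro x
    exact ⟨-J x, by rw [map_neg, hJJ, neg_neg]⟩
  -- L₁ is closed
  have hL₁c : IsClosed (L₁ : Set H) := by
    have hset : (L₁ : Set H) = ⇑J ⁻¹' (L₁ᗮ : Set H) := by
      ext x
      simp only [Set.mem_preimage, SetLike.mem_coe]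
      constructor
      · intro hx
        rw [← hL₁]
        exact Submodule.mem_map_of_mem hx
      · intro hx
        rw [← hL₁] at hx
        obtain ⟨y, hy, hxy⟩ := hx
        simp only [ContinuousLinearMap.coe_coe] at hxy
        rwa [← hJinj hxy]
    rw [hset]
    exact (Submodule.isClosed_orthogonal L₁).preimage J.continuous
  haveI : CompleteSpace ↥L₁ := hL₁c.completeSpace_coe
  -- projection facts
  have hPzero : ∀ x ∈ L₀ᗮ, P x = 0 := fun x hx => Submodule.orthogonalProjectionOnto_eq_zero_iff.mpr hx
  have hPself : ∀ w : ↥L₀, P ↑w = w := fun w => Submodule.orthogonalProjectionOnto_mem_subspace_eq_self w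
  have hJL₀ : ∀ u ∈ L₀, J u ∈ L₀ᗮ := by
    intro u hu
    rw [← hL₀]
    exact Submodule.mem_map_of_mem hu
  -- the graph operator into L₁ and the comparison operator A
  set S' : ↥L₀ →L[ℝ] ↥L₁ := S.codRestrict L₁ hSrange with hS'def
  set A : ↥L₁ →L[ℝ] ↥L₀ := P ∘L (J ∘L L₁.subtypeL) with hAdef
  have hTA : T = A ∘L S' := by ext u; rfl
  -- A is injective
  have hAker : LinearMap.ker (A : ↥L₁ →ₗ[ℝ] ↥L₀) = ⊥ := by
    rw [LinearMap.ker_eq_bot']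
    intro v hv
    have h1 : J (v : H) ∈ L₀ᗮ := Submodule.orthogonalProjectionOnto_eq_zero_iff.mp hv
    rw [← hL₀] at h1
    obtain ⟨u, hu, huv⟩ := h1
    simp only [ContinuousLinearMap.coe_coe] at huv
    have hmem : (v : H) ∈ L₀ ⊓ L₁ := ⟨hJinj huv ▸ hu, v.2⟩
    rw [hcompl₁] at hmem
    exact Subtype.ext ((Submodule.mem_bot ℝ).mp hmem)
  have hAinj : Function.Injective A := LinearMap.ker_eq_bot.mp hAker
  -- A is surjective
  have hsupperp : L₀ᗮ ⊔ L₁ᗮ = ⊤ := by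
    have hmt : Submodule.map (J : H →ₗ[ℝ] H) ⊤ = ⊤ := by
      rw [Submodule.map_top, LinearMap.range_eq_top]
      exact hJsurj
    rw [← hL₀, ← hL₁, ← Submodule.map_sup, hcompl₂, hmt]
  have hArange : LinearMap.range (A : ↥L₁ →ₗ[ℝ] ↥L₀) = ⊤ := by
    rw [LinearMap.range_eq_top]
    rintro ⟨w, hw⟩
    have hmem : w ∈ L₀ᗮ ⊔ L₁ᗮ := by rw [hsupperp]; trivial
    obtain ⟨a, ha, b, hb, hab⟩ := Submodule.mem_sup.mp hmem
    rw [← hL₁] at hb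
    obtain ⟨v, hv, hvb⟩ := hb
    simp only [ContinuousLinearMap.coe_coe] at hvb
    refine ⟨⟨v, hv⟩, ?_⟩
    have hJv : J v = w - a := by rw [← hab, hvb]; abel
    have hAv : A ⟨v, hv⟩ = P (w - a) := by
      show P (J v) = P (w - a)
      rw [hJv]
    show A ⟨v, hv⟩ = ⟨w, hw⟩
    rw [hAv, map_sub, hPzero a ha, sub_zero]
    exact hPself ⟨w, hw⟩
  have hAsurj : Function.Surjective A := LinearMap.range_eq_top.mp hArange
  -- T u = 0 ↔ S u = 0
  have hST0 : ∀ u : ↥L₀, T u = 0 ↔ S u = 0 := by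
    intro u
    constructor
    · intro h
      have h1 : J (S u) ∈ L₀ᗮ := Submodule.orthogonalProjectionOnto_eq_zero_iff.mp h
      rw [← hL₀] at h1
      obtain ⟨w, hw, hws⟩ := h1
      simp only [ContinuousLinearMap.coe_coe] at hws
      have hmem : S u ∈ L₀ ⊓ L₁ := ⟨hJinj hws ▸ hw, hSrange u⟩
      rw [hcompl₁] at hmem
      exact (Submodule.mem_bot ℝ).mp hmem
    · intro h
      show P (J (S u)) = 0
      rw [h, map_zero, map_zero]
  -- membership in L
  have hmemL : ∀ x : H, x ∈ L ↔ ∃ u : ↥L₀, (u : H) + S u = x := by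
    intro x
    rw [hgraph]
    constructor
    · rintro ⟨u, hu⟩
      exact ⟨u, by simpa using hu⟩
    · rintro ⟨u, hu⟩
      exact ⟨u, by simpa using hu⟩
  -- kernel identification
  have hinf : (LinearMap.ker (T : ↥L₀ →ₗ[ℝ] ↥L₀)).map L₀.subtype = L ⊓ L₀ := by
    ext x
    simp only [Submodule.mem_map, LinearMap.mem_ker, Submodule.mem_inf, Submodule.coe_subtype]
    constructor
    · rintro ⟨u, hu, rfl⟩
      have hSu : S u = 0 := (hST0 u).mp hu
      refine ⟨(hmemL _).mpr ⟨u, by rw [hSu, add_zero]⟩, u.2⟩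
    · rintro ⟨hxL, hxL₀⟩
      obtain ⟨u, hu⟩ := (hmemL x).mp hxL
      have hSu : S u = 0 := by
        have h1 : S u ∈ L₀ ⊓ L₁ := by
          refine ⟨?_, hSrange u⟩
          have hx' : S u = x - ↑u := by rw [← hu]; abel
          rw [hx']
          exact Submodule.sub_mem _ hxL₀ u.2
        rw [hcompl₁] at h1
        exact (Submodule.mem_bot ℝ).mp h1
      refine ⟨u, (hST0 u).mpr hSu, ?_⟩
      rw [← hu, hSu, add_zero]
  -- the operator B = P ∘ J
  set B : H →L[ℝ] ↥L₀ := P ∘L J with hBdef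
  have hB0 : ∀ u ∈ L₀, B u = 0 := fun u hu => hPzero (J u) (hJL₀ u hu)
  have hBsurj : ∀ w : ↥L₀, ∃ x : H, B x = w := by
    intro w
    refine ⟨-J ↑w, ?_⟩
    have : J (-J (w : H)) = (w : H) := by rw [map_neg, hJJ, neg_neg]
    show P (J (-J (w : H))) = w
    rw [this]
    exact hPself w
  -- the sup identification
  have hsupB : L ⊔ L₀ = Submodule.comap (B : H →ₗ[ℝ] ↥L₀) (LinearMap.range (T : ↥L₀ →ₗ[ℝ] ↥L₀)) := by
    ext x
    simp only [Submodule.mem_comap, LinearMap.mem_range, ContinuousLinearMap.coe_coe]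
    constructor
    · intro hx
      obtain ⟨l, hl, w, hw, hlw⟩ := Submodule.mem_sup.mp hx
      obtain ⟨u, hu⟩ := (hmemL l).mp hl
      refine ⟨u, ?_⟩
      have hx' : x = ↑u + S u + w := by rw [← hlw, ← hu]
      rw [hx', map_add, map_add, hB0 _ u.2, hB0 _ hw, zero_add, add_zero]
      rfl
    · rintro ⟨u, hu⟩
      have hx : x ∈ L₀ ⊔ L₁ := by rw [hcompl₂]; trivial
      obtain ⟨w, hw, v, hv, hwv⟩ := Submodule.mem_sup.mp hx
      have hBx : B x = A ⟨v, hv⟩ := by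
        rw [← hwv]
        show B (w + v) = A ⟨v, hv⟩
        rw [map_add, hB0 _ hw, zero_add]
        rfl
      have hS'v : S' u = ⟨v, hv⟩ := by
        apply hAinj
        have h1 : A (S' u) = T u := rfl
        rw [h1, hu, hBx]
      have hSu : S u = v := congrArg Subtype.val hS'v
      apply Submodule.mem_sup.mpr
      refine ⟨↑u + S u, (hmemL _).mpr ⟨u, rfl⟩, w - ↑u, Submodule.sub_mem _ hw u.2, ?_⟩
      rw [hSu, ← hwv]
      abel
  -- range submodules
  set N : Submodule ℝ ↥L₁ := LinearMap.range (S' : ↥L₀ →ₗ[ℝ] ↥L₁) with hNdef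
  have hKN : LinearMap.range (T : ↥L₀ →ₗ[ℝ] ↥L₀) = N.map (A : ↥L₁ →ₗ[ℝ] ↥L₀) := by
    ext x
    simp only [LinearMap.mem_range, Submodule.mem_map, hTA]
    constructor
    · rintro ⟨u, rfl⟩
      exact ⟨S' u, ⟨u, rfl⟩, rfl⟩
    · rintro ⟨n, ⟨u, rfl⟩, rfl⟩
      exact ⟨u, rfl⟩
  -- the equivalence e : L₁ ≃ L₀
  set e : ↥L₁ ≃L[ℝ] ↥L₀ := ContinuousLinearEquiv.ofBijective A hAker hArange with hedef
  have hecoe : ⇑e = ⇑A := ContinuousLinearEquiv.coeFn_ofBijective A hAker hArange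
  -- N in terms of L ⊔ L₀
  have hNset : (N : Set ↥L₁) = (Subtype.val : ↥L₁ → H) ⁻¹' (((L ⊔ L₀) ⊓ L₁ : Submodule ℝ H) : Set H) := by
    ext v
    simp only [Set.mem_preimage, SetLike.mem_coe, Submodule.mem_inf]
    constructor
    · rintro hvN
      obtain ⟨u, hu⟩ := hvN
      have hSu : S u = ↑v := congrArg Subtype.val hu
      constructor
      · apply Submodule.mem_sup.mpr
        refine ⟨↑u + S u, (hmemL _).mpr ⟨u, rfl⟩, -↑u, Submodule.neg_mem _ u.2, ?_⟩
        rw [hSu]; abel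
      · exact v.2
    · rintro ⟨hvL, _⟩
      have h1 : B ↑v ∈ LinearMap.range (T : ↥L₀ →ₗ[ℝ] ↥L₀) := by
        have := (hsupB ▸ hvL : (v : H) ∈ Submodule.comap (B : H →ₗ[ℝ] ↥L₀) (LinearMap.range (T : ↥L₀ →ₗ[ℝ] ↥L₀)))
        exact this
      have hBv : B ↑v = A v := rfl
      rw [hBv, hKN] at h1
      obtain ⟨n, hn, hna⟩ := h1
      rwa [← hAinj hna]
  -- closure transfer: pair closed → range T closed
  have hclosed₁ : IsClosed ((L ⊔ L₀ : Submodule ℝ H) : Set H) → IsClosed ((LinearMap.range (T : ↥L₀ →ₗ[ℝ] ↥L₀) : Submodule ℝ ↥L₀) : Set ↥L₀) := by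
    intro hcl
    have hNc : IsClosed (N : Set ↥L₁) := by
      rw [hNset]
      have : IsClosed ((((L ⊔ L₀) ⊓ L₁ : Submodule ℝ H)) : Set H) := by
        have : (((L ⊔ L₀) ⊓ L₁ : Submodule ℝ H) : Set H) = ((L ⊔ L₀ : Submodule ℝ H) : Set H) ∩ (L₁ : Set H) := rfl
        rw [this]
        exact hcl.inter hL₁c
      exact this.preimage continuous_subtype_val
    have hKset : ((LinearMap.range (T : ↥L₀ →ₗ[ℝ] ↥L₀) : Submodule ℝ ↥L₀) : Set ↥L₀) = ⇑e.symm ⁻¹' (N : Set ↥L₁) := by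
      ext x
      simp only [Set.mem_preimage, SetLike.mem_coe]
      rw [hKN]
      constructor
      · rintro ⟨n, hn, hna⟩
        have : e n = x := by rw [hecoe]; exact hna
        rwa [← this, ContinuousLinearEquiv.symm_apply_apply]
      · intro hx
        refine ⟨e.symm x, hx, ?_⟩
        show A (e.symm x) = x
        have h5 : A (e.symm x) = e (e.symm x) := by rw [hecoe]
        rw [h5, ContinuousLinearEquiv.apply_symm_apply]
    rw [hKset]
    exact hNc.preimage e.symm.continuous
  -- closure transfer: range T closed → pair closed
  have hclosed₂ : IsClosed ((LinearMap.range (T : ↥L₀ →ₗ[ℝ] ↥L₀) : Submodule ℝ ↥L₀) : Set ↥L₀) → IsClosed ((L ⊔ L₀ : Submodule ℝ H) : Set H) := by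
    intro hcl
    have hset : ((L ⊔ L₀ : Submodule ℝ H) : Set H) = ⇑B ⁻¹' ((LinearMap.range (T : ↥L₀ →ₗ[ℝ] ↥L₀) : Submodule ℝ ↥L₀) : Set ↥L₀) := by
      rw [hsupB]; rfl
    rw [hset]
    exact hcl.preimage B.continuous

  -- cokernel transfer
  have hcoker : IsClosed ((L ⊔ L₀ : Submodule ℝ H) : Set H) →
      (FiniteDimensional ℝ ↥((L ⊔ L₀)ᗮ) ↔ FiniteDimensional ℝ (↥L₀ ⧸ LinearMap.range (T : ↥L₀ →ₗ[ℝ] ↥L₀))) := by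
    intro hcl
    haveI : CompleteSpace ↥(L ⊔ L₀ : Submodule ℝ H) := hcl.completeSpace_coe
    have hcompl : IsCompl (L ⊔ L₀) (L ⊔ L₀)ᗮ := Submodule.isCompl_orthogonal_of_hasOrthogonalProjection
    let e₁ : (H ⧸ (L ⊔ L₀)) ≃ₗ[ℝ] ↥((L ⊔ L₀)ᗮ) :=
      Submodule.quotientEquivOfIsCompl (L ⊔ L₀) (L ⊔ L₀)ᗮ hcompl
    have hle : L ⊔ L₀ ≤ Submodule.comap (B : H →ₗ[ℝ] ↥L₀) (LinearMap.range (T : ↥L₀ →ₗ[ℝ] ↥L₀)) := le_of_eq hsupB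
    let q : (H ⧸ (L ⊔ L₀)) →ₗ[ℝ] (↥L₀ ⧸ LinearMap.range (T : ↥L₀ →ₗ[ℝ] ↥L₀)) :=
      Submodule.mapQ (L ⊔ L₀) (LinearMap.range (T : ↥L₀ →ₗ[ℝ] ↥L₀)) (B : H →ₗ[ℝ] ↥L₀) hle
    have hqinj : Function.Injective q := by
      rw [← LinearMap.ker_eq_bot, LinearMap.ker_eq_bot']
      intro m hm
      obtain ⟨x, rfl⟩ := Submodule.Quotient.mk_surjective _ m
      rw [Submodule.mapQ_apply, Submodule.Quotient.mk_eq_zero] at hm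
      rw [Submodule.Quotient.mk_eq_zero, hsupB]
      exact hm
    have hqsurj : Function.Surjective q := by
      intro m
      obtain ⟨y, rfl⟩ := Submodule.Quotient.mk_surjective _ m
      obtain ⟨x, hx⟩ := hBsurj y
      refine ⟨Submodule.Quotient.mk x, ?_⟩
      rw [Submodule.mapQ_apply]
      congr 1
    let e₂ : (H ⧸ (L ⊔ L₀)) ≃ₗ[ℝ] (↥L₀ ⧸ LinearMap.range (T : ↥L₀ →ₗ[ℝ] ↥L₀)) :=
      LinearEquiv.ofBijective q ⟨hqinj, hqsurj⟩
    constructor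
    · intro h
      haveI := h
      exact Module.Finite.equiv (e₁.symm.trans e₂)
    · intro h
      haveI := h
      exact Module.Finite.equiv (e₂.symm.trans e₁)
  -- kernel transfer
  have hkerequiv : FiniteDimensional ℝ ↥(L ⊓ L₀) ↔ FiniteDimensional ℝ (LinearMap.ker (T : ↥L₀ →ₗ[ℝ] ↥L₀)) := by
    constructor
    · intro h
      rw [← hinf] at h
      haveI := h
      exact Module.Finite.equiv
        (Submodule.equivMapOfInjective L₀.subtype L₀.injective_subtype (LinearMap.ker (T : ↥L₀ →ₗ[ℝ] ↥L₀))).symm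
    · intro h
      rw [← hinf]
      haveI := h
      exact Module.Finite.equiv
        (Submodule.equivMapOfInjective L₀.subtype L₀.injective_subtype (LinearMap.ker (T : ↥L₀ →ₗ[ℝ] ↥L₀)))
  constructor
  · rintro ⟨h1, h2, h3⟩
    exact ⟨hkerequiv.mp h1, hclosed₁ h2, (hcoker h2).mp h3⟩
  · rintro ⟨h1, h2, h3⟩
    have h2' := hclosed₂ h2
    exact ⟨hkerequiv.mpr h1, h2', (hcoker h2').mpr h3⟩
end

section
/- If (L₀, L₁) is a Fredholm pair of lagrangians in a symplectic Hilbert space H, then there exists a lagrangian L₁' with P_{L₁'} - P_{L₁} compact such that L₀ ∩ L₁' = 0 and L₀ + L₁' = H. -/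
open ContinuousLinearMap Submodule
open scoped RealInnerProductSpace

variable {H : Type*} [NormedAddCommGroup H] [InnerProductSpace ℝ H] [CompleteSpace H]

/-- The orthogonal projection onto a closed subspace, as an operator `H →L[ℝ] H`. -/
noncomputable def orthProj (L : Submodule ℝ H) (hL : IsClosed (L : Set H)) : H →L[ℝ] H :=
  haveI := hL.completeSpace_coe
  L.subtypeL ∘L L.orthogonalProjectionOnto

lemma aux_compact_of_finDim {E F : Type*} [NormedAddCommGroup E] [NormedSpace ℝ E]
    [NormedAddCommGroup F] [NormedSpace ℝ F] [FiniteDimensional ℝ E] (f : E →L[ℝ] F) :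
    IsCompactOperator f := by
  refine ⟨f '' Metric.closedBall 0 1,
    (isCompact_closedBall 0 1).image f.continuous, ?_⟩
  exact Filter.mem_of_superset (Metric.closedBall_mem_nhds 0 one_pos)
    (Set.subset_preimage_image _ _)

lemma aux_orthProj_compact (K : Submodule ℝ H) [FiniteDimensional ℝ K]
    (hK : IsClosed (K : Set H)) : IsCompactOperator (orthProj K hK) := by
  haveI := hK.completeSpace_coe
  exact (aux_compact_of_finDim K.subtypeL).comp_clm (orthogonalProjection K)

lemma aux_isClosed_sup (A B : Submodule ℝ H) (hA : IsClosed (A : Set H))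
    [FiniteDimensional ℝ B] : IsClosed ((A ⊔ B : Submodule ℝ H) : Set H) := by
  haveI := hA.completeSpace_coe
  haveI := A.isClosed_orthogonal.completeSpace_coe
  set P : H →L[ℝ] H := orthProj Aᗮ A.isClosed_orthogonal with hP
  have hPapp : ∀ x : H, P x = (orthogonalProjection Aᗮ x : H) := fun _ => rfl
  set B' := B.map (P : H →ₗ[ℝ] H) with hB'
  haveI : FiniteDimensional ℝ B' := Module.Finite.map B (P : H →ₗ[ℝ] H)
  have hB'A : B' ≤ Aᗮ := by
    rintro x ⟨b, _, rfl⟩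
    exact (orthogonalProjection Aᗮ b).2
  have hsub : ∀ x : H, x - P x ∈ A := by
    intro x
    have := Submodule.sub_starProjection_mem_orthogonal (K := Aᗮ) x
    rwa [Submodule.orthogonal_orthogonal] at this
  have hsup : A ⊔ B = A ⊔ B' := by
    apply le_antisymm
    · refine sup_le le_sup_left fun b hb => ?_
      have : b = (b - P b) + P b := by abel
      rw [this]
      exact add_mem (mem_sup_left (hsub b)) (mem_sup_right ⟨b, hb, rfl⟩)
    · refine sup_le le_sup_left ?_
      rintro x ⟨b, hb, rfl⟩
      show P b ∈ A ⊔ B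
      have : P b = b - (b - P b) := by abel
      rw [this]
      exact sub_mem (mem_sup_right hb) (mem_sup_left (hsub b))
  have hset : ((A ⊔ B' : Submodule ℝ H) : Set H) = P ⁻¹' (B' : Set H) := by
    ext x
    constructor
    · intro hx
      rcases mem_sup.1 hx with ⟨a, ha, b', hb', rfl⟩
      have hPa : P a = 0 := by
        rw [hPapp]
        rw [Submodule.orthogonalProjectionOnto_apply_of_mem_orthogonal
          (Submodule.le_orthogonal_orthogonal A ha)]
        simp
      have hPb : P b' = b' := by
        rw [hPapp]; exact (Submodule.starProjection_eq_self_iff (K := Aᗮ)).2 (hB'A hb')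
      show P (a + b') ∈ B'
      rw [map_add, hPa, hPb, zero_add]
      exact hb'
    · intro hx
      have : x = (x - P x) + P x := by abel
      rw [SetLike.mem_coe, this]
      exact add_mem (mem_sup_left (hsub x)) (mem_sup_right hx)
  rw [hsup, hset]
  exact (B'.closed_of_finiteDimensional).preimage P.continuous

section Jfacts
variable (J : H →L[ℝ] H)

omit [CompleteSpace H] in
lemma aux_JJ (hJ2 : J ∘L J = -1) (x : H) : J (J x) = -x := by
  have := congrArg (fun f : H →L[ℝ] H => f x) hJ2
  simpa using this

lemma aux_Jinner (hJ2 : J ∘L J = -1) (hJadj : ContinuousLinearMap.adjoint J = -J)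
    (x y : H) : ⟪J x, J y⟫ = ⟪x, y⟫ := by
  have h1 : ⟪J x, J y⟫ = ⟪x, ContinuousLinearMap.adjoint J (J y)⟫ := by
    rw [ContinuousLinearMap.adjoint_inner_right]
  rw [h1, hJadj]
  simp [aux_JJ J hJ2 y]

lemma aux_Jsurj (hJ2 : J ∘L J = -1) : Function.Surjective J := fun x =>
  ⟨-(J x), by rw [map_neg, aux_JJ J hJ2 x, neg_neg]⟩

lemma aux_map_orthogonal (hJ2 : J ∘L J = -1) (hJadj : ContinuousLinearMap.adjoint J = -J)
    (K : Submodule ℝ H) :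
    Kᗮ.map (J : H →ₗ[ℝ] H) = (K.map (J : H →ₗ[ℝ] H))ᗮ := by
  apply le_antisymm
  · rintro x ⟨y, hy, rfl⟩
    rw [Submodule.mem_orthogonal]
    rintro u ⟨k, hk, rfl⟩
    show ⟪J k, J y⟫ = 0
    rw [aux_Jinner J hJ2 hJadj]
    exact hy k hk
  · intro x hx
    obtain ⟨y, rfl⟩ := aux_Jsurj J hJ2 x
    refine ⟨y, ?_, rfl⟩
    show y ∈ Kᗮ
    rw [Submodule.mem_orthogonal]
    intro k hk
    have := (Submodule.mem_orthogonal _ _).1 hx (J k) ⟨k, hk, rfl⟩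
    rwa [aux_Jinner J hJ2 hJadj] at this

end Jfacts

lemma aux_orthProj_sup (A B : Submodule ℝ H) (hA : IsClosed (A : Set H))
    (hB : IsClosed (B : Set H)) (hsup : IsClosed ((A ⊔ B : Submodule ℝ H) : Set H))
    (hBA : B ≤ Aᗮ) :
    orthProj (A ⊔ B) hsup = orthProj A hA + orthProj B hB := by
  haveI := hA.completeSpace_coe
  haveI := hB.completeSpace_coe
  haveI := hsup.completeSpace_coe
  have hAB : A ≤ Bᗮ := by
    intro a ha
    rw [Submodule.mem_orthogonal]
    intro b hb
    exact (Submodule.mem_orthogonal' _ _).1 (hBA hb) a ha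
  ext x
  show (orthogonalProjection (A ⊔ B) x : H) =
    (orthogonalProjection A x : H) + (orthogonalProjection B x : H)
  refine Submodule.eq_starProjection_of_mem_orthogonal
    (add_mem (mem_sup_left (orthogonalProjection A x).2)
      (mem_sup_right (orthogonalProjection B x).2)) ?_
  rw [← Submodule.inf_orthogonal]
  constructor
  · have h1 : x - ((orthogonalProjection A x : H) + (orthogonalProjection B x : H)) =
        (x - orthogonalProjection A x) - (orthogonalProjection B x : H) := by abel
    rw [h1]
    exact sub_mem (Submodule.sub_starProjection_mem_orthogonal x)
      (hBA (orthogonalProjection B x).2)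
  · have h1 : x - ((orthogonalProjection A x : H) + (orthogonalProjection B x : H)) =
        (x - orthogonalProjection B x) - (orthogonalProjection A x : H) := by abel
    rw [h1]
    exact sub_mem (Submodule.sub_starProjection_mem_orthogonal x)
      (hAB (orthogonalProjection A x).2)

lemma orthProj_congr {K K' : Submodule ℝ H} (hK : IsClosed (K : Set H))
    (hK' : IsClosed (K' : Set H)) (h : K = K') : orthProj K hK = orthProj K' hK' := by
  subst h; rfl

/-- If `(L₀, L₁)` is a Fredholm pair of lagrangians, then there is a lagrangian `L₁'`
which is a compact perturbation of `L₁` and is complementary to `L₀`. -/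
theorem fredholm_pair_compl_compact_perturbation (J : H →L[ℝ] H)
    (hJ2 : J ∘L J = -1) (hJadj : ContinuousLinearMap.adjoint J = -J)
    (L₀ L₁ : Submodule ℝ H)
    (hL₀c : IsClosed (L₀ : Set H)) (hL₁c : IsClosed (L₁ : Set H))
    (hL₀ : L₀.map (J : H →ₗ[ℝ] H) = L₀ᗮ) (hL₁ : L₁.map (J : H →ₗ[ℝ] H) = L₁ᗮ)
    (hfin : FiniteDimensional ℝ ↥(L₀ ⊓ L₁))
    (hclosed : IsClosed ((L₀ ⊔ L₁ : Submodule ℝ H) : Set H))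
    (hcofin : FiniteDimensional ℝ ↥((L₀ ⊔ L₁)ᗮ)) :
    ∃ (L₁' : Submodule ℝ H) (hc : IsClosed (L₁' : Set H)),
      L₁'.map (J : H →ₗ[ℝ] H) = L₁'ᗮ ∧
      IsCompactOperator (⇑(orthProj L₁' hc - orthProj L₁ hL₁c)) ∧
      L₀ ⊓ L₁' = ⊥ ∧ L₀ ⊔ L₁' = ⊤ := by
  haveI := hL₁c.completeSpace_coe
  haveI := hclosed.completeSpace_coe
  have hJinj : Function.Injective (J : H →ₗ[ℝ] H) := by
    intro x y h
    have h2 := congrArg J h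
    simp only [ContinuousLinearMap.coe_coe] at h2
    rwa [aux_JJ J hJ2, aux_JJ J hJ2, neg_inj] at h2
  set W : Submodule ℝ H := L₀ ⊓ L₁ with hWdef
  haveI : FiniteDimensional ℝ W := hfin
  have hWc : IsClosed (W : Set H) := W.closed_of_finiteDimensional
  haveI := hWc.completeSpace_coe
  set JW : Submodule ℝ H := W.map (J : H →ₗ[ℝ] H) with hJWdef
  haveI : FiniteDimensional ℝ JW := Module.Finite.map W _
  have hJWc : IsClosed (JW : Set H) := JW.closed_of_finiteDimensional
  set A : Submodule ℝ H := L₁ ⊓ Wᗮ with hAdef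
  have hAc : IsClosed (A : Set H) := by
    rw [hAdef, Submodule.coe_inf]
    exact hL₁c.inter W.isClosed_orthogonal
  have hJWL₀ : JW ≤ L₀ᗮ := hL₀ ▸ Submodule.map_mono inf_le_left
  have hJWL₁ : JW ≤ L₁ᗮ := hL₁ ▸ Submodule.map_mono inf_le_right
  have hJW_le_Aorth : JW ≤ Aᗮ := by
    intro x hx
    rw [Submodule.mem_orthogonal]
    intro a ha
    exact (Submodule.mem_orthogonal _ _).1 (hJWL₁ hx) a ha.1
  have hW_le_JWorth : W ≤ JWᗮ := by
    intro w hw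
    rw [Submodule.mem_orthogonal]
    intro u hu
    rw [real_inner_comm]
    exact (Submodule.mem_orthogonal _ _).1 (hJWL₁ hu) w hw.2
  have hW_le_Aorth : W ≤ Aᗮ := by
    intro w hw
    rw [Submodule.mem_orthogonal]
    intro a ha
    exact (Submodule.mem_orthogonal' _ _).1 ha.2 w hw
  have hL₁decomp : A ⊔ W = L₁ := by
    have h := Submodule.sup_orthogonal_inf_of_hasOrthogonalProjection
      (inf_le_right : W ≤ L₁)
    rw [sup_comm, inf_comm] at h
    exact h
  refine ⟨A ⊔ JW, aux_isClosed_sup A JW hAc, ?_, ?_, ?_, ?_⟩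
  · -- lagrangian
    have hmapJJ : JW.map (J : H →ₗ[ℝ] H) = W := by
      ext x
      constructor
      · rintro ⟨y, ⟨w, hw, rfl⟩, rfl⟩
        show J (J w) ∈ W
        rw [aux_JJ J hJ2]
        exact neg_mem hw
      · intro hx
        refine ⟨J (-x), ⟨-x, neg_mem hx, rfl⟩, ?_⟩
        show J (J (-x)) = x
        rw [aux_JJ J hJ2, neg_neg]
    have hmapA : A.map (J : H →ₗ[ℝ] H) = L₁ᗮ ⊓ JWᗮ := by
      rw [hAdef, Submodule.map_inf _ hJinj, hL₁, aux_map_orthogonal J hJ2 hJadj]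
    have hCc : IsClosed ((L₁ᗮ ⊔ W : Submodule ℝ H) : Set H) :=
      aux_isClosed_sup L₁ᗮ W L₁.isClosed_orthogonal
    haveI := hCc.completeSpace_coe
    have hCorth : (L₁ᗮ ⊔ W)ᗮ = A := by
      rw [← Submodule.inf_orthogonal, Submodule.orthogonal_orthogonal]
    have hAorth : Aᗮ = L₁ᗮ ⊔ W := by
      rw [← hCorth, Submodule.orthogonal_orthogonal]
    rw [Submodule.map_sup, hmapA, hmapJJ, ← Submodule.inf_orthogonal, hAorth,
      sup_comm L₁ᗮ W, sup_inf_assoc_of_le _ hW_le_JWorth, sup_comm]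
  · -- compactness
    have hproj1 : orthProj (A ⊔ JW) (aux_isClosed_sup A JW hAc) =
        orthProj A hAc + orthProj JW hJWc :=
      aux_orthProj_sup A JW hAc hJWc _ hJW_le_Aorth
    have hsupWc : IsClosed ((A ⊔ W : Submodule ℝ H) : Set H) := by
      rw [hL₁decomp]; exact hL₁c
    have hproj2 : orthProj L₁ hL₁c = orthProj A hAc + orthProj W hWc :=
      (orthProj_congr hL₁c hsupWc hL₁decomp.symm).trans
        (aux_orthProj_sup A W hAc hWc hsupWc hW_le_Aorth)
    have hdiff : orthProj (A ⊔ JW) (aux_isClosed_sup A JW hAc) - orthProj L₁ hL₁c =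
        orthProj JW hJWc - orthProj W hWc := by
      rw [hproj1, hproj2]; abel
    rw [hdiff, ContinuousLinearMap.coe_sub']
    exact (aux_orthProj_compact JW hJWc).sub (aux_orthProj_compact W hWc)
  · -- trivial intersection
    rw [eq_bot_iff]
    rintro x ⟨hx0, hx1⟩
    rcases mem_sup.1 hx1 with ⟨a, ha, b, hb, rfl⟩
    have hb0 : b = 0 := by
      have h1 : ⟪b, a + b⟫ = 0 :=
        (Submodule.mem_orthogonal' _ _).1 (hJWL₀ hb) _ hx0
      have h2 : ⟪b, a⟫ = 0 :=
        (Submodule.mem_orthogonal' _ _).1 (hJWL₁ hb) _ ha.1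
      have h3 : ⟪b, b⟫ = 0 := by
        have := h1
        rw [inner_add_right, h2, zero_add] at this
        exact this
      exact inner_self_eq_zero.1 h3
    subst hb0
    rw [add_zero] at hx0 ⊢
    have haW : a ∈ W := ⟨hx0, ha.1⟩
    have : ⟪a, a⟫ = 0 := (Submodule.mem_orthogonal' _ _).1 ha.2 a haW
    simpa using inner_self_eq_zero.1 this
  · -- sum is everything
    have h2 : L₀ ⊔ A = L₀ ⊔ L₁ := by
      apply le_antisymm
      · exact sup_le le_sup_left (inf_le_left.trans le_sup_right)
      · refine sup_le le_sup_left ?_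
        rw [← hL₁decomp]
        exact sup_le le_sup_right ((inf_le_left : W ≤ L₀).trans le_sup_left)
    have h3 : JW = (L₀ ⊔ L₁)ᗮ := by
      rw [hJWdef, hWdef, Submodule.map_inf _ hJinj, hL₀, hL₁,
        Submodule.inf_orthogonal]
    rw [← sup_assoc, h2, h3]
    exact Submodule.sup_orthogonal_of_hasOrthogonalProjection
end

section
/- If T is a bounded invertible operator on a Hilbert space H commuting with the complex structure J, T - I is compact, and T(L₀) = L₀ for a lagrangian L₀, then the unitary part U = T S⁻¹ of the polar decomposition T = US (S the positive square root of T*T) satisfies: U commutes with J, U - I is compact. -/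
set_option maxHeartbeats 1600000
set_option synthInstance.maxHeartbeats 400000
open ContinuousLinearMap RealInnerProductSpace
open scoped NNReal

variable {H : Type*} [NormedAddCommGroup H] [InnerProductSpace ℝ H] [CompleteSpace H]

namespace PolarAux

lemma inner_nonneg {P : H →L[ℝ] H} (hP : P.IsPositive) (x : H) : 0 ≤ ⟪P x, x⟫ := by
  simpa using hP.inner_nonneg_left x

lemma symm {P : H →L[ℝ] H} (hP : IsSelfAdjoint P) (x y : H) : ⟪P x, y⟫ = ⟪x, P y⟫ :=
  (isSelfAdjoint_iff_isSymmetric.mp hP) x y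

/-- semidefinite Cauchy-Schwarz degenerate case -/
lemma apply_eq_zero_of_inner_self_eq_zero {P : H →L[ℝ] H} (hP : P.IsPositive) {u : H}
    (h : ⟪P u, u⟫ = 0) : P u = 0 := by
  have key : ∀ v : H, ⟪P u, v⟫ = 0 := by
    intro v
    set a : ℝ := ⟪P u, v⟫ with ha
    set c : ℝ := ⟪P v, v⟫ with hc
    have hc0 : 0 ≤ c := inner_nonneg hP v
    have hkey : ∀ t : ℝ, 0 ≤ 2 * t * a + t ^ 2 * c := by
      intro t
      have h0 := inner_nonneg hP (u + t • v)
      have hexp : ⟪P (u + t • v), u + t • v⟫ = ⟪P u, u⟫ + 2 * t * a + t ^ 2 * c := by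
        rw [map_add, inner_add_left, inner_add_right, inner_add_right, map_smul,
          inner_smul_left, inner_smul_right, inner_smul_left, inner_smul_right]
        have hsym : ⟪P v, u⟫ = a := by
          rw [symm hP.isSelfAdjoint v u, real_inner_comm]
        rw [hsym]
        simp only [starRingEnd_apply, star_trivial]
        ring
      rw [hexp, h] at h0
      linarith
    have h1 := hkey (-(a / (c + 1)))
    have hc1 : (0:ℝ) < c + 1 := by linarith
    have h2 : 0 ≤ (2 * (-(a / (c + 1))) * a + (-(a / (c + 1))) ^ 2 * c) * (c + 1) ^ 2 :=
      mul_nonneg h1 (by positivity)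
    have h3 : (2 * (-(a / (c + 1))) * a + (-(a / (c + 1))) ^ 2 * c) * (c + 1) ^ 2
        = -(a ^ 2) * (c + 2) := by
      field_simp
      ring
    rw [h3] at h2
    have h4 : a ^ 2 = 0 := le_antisymm (by nlinarith) (sq_nonneg a)
    exact pow_eq_zero_iff two_ne_zero |>.mp h4
  have := key (P u)
  exact inner_self_eq_zero.mp this


lemma conj_pos {T X : H →L[ℝ] H} (hT : T.IsPositive) (hX : IsSelfAdjoint X) :
    (X * T * X).IsPositive := by
  have h := hT.conj_adjoint X
  rw [hX.adjoint_eq] at h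
  have : X ∘L T ∘L X = X * T * X := (mul_assoc X T X).symm
  rwa [this] at h

lemma sq_pos {X : H →L[ℝ] H} (hX : IsSelfAdjoint X) : (X * X).IsPositive := by
  have := conj_pos (isPositive_one (E := H)) hX
  rwa [mul_one] at this

lemma pos_of_inner {X : H →L[ℝ] H} (hsa : IsSelfAdjoint X) (h : ∀ x, 0 ≤ ⟪X x, x⟫) :
    X.IsPositive := by
  refine ⟨isSelfAdjoint_iff_isSymmetric.mp hsa, fun x => ?_⟩
  simpa [ContinuousLinearMap.reApplyInnerSelf] using h x

lemma smul_sa {X : H →L[ℝ] H} (hX : IsSelfAdjoint X) (r : ℝ) : IsSelfAdjoint (r • X) := by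
  rw [isSelfAdjoint_iff_isSymmetric] at hX ⊢
  intro x y
  simp only [ContinuousLinearMap.coe_smul, LinearMap.smul_apply, ContinuousLinearMap.coe_coe,
    real_inner_smul_left, real_inner_smul_right]
  exact congrArg (r * ·) (hX x y)

lemma smul_pos {X : H →L[ℝ] H} (hX : X.IsPositive) {r : ℝ} (hr : 0 ≤ r) :
    (r • X).IsPositive := by
  refine pos_of_inner (smul_sa hX.isSelfAdjoint r) fun x => ?_
  rw [ContinuousLinearMap.smul_apply, real_inner_smul_left]
  exact mul_nonneg hr (inner_nonneg hX x)

lemma one_sub_pos {X : H →L[ℝ] H} (hX : IsSelfAdjoint X) (hn : ‖X‖ ≤ 1) :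
    (1 - X).IsPositive := by
  refine pos_of_inner (((IsSelfAdjoint.one (R := H →L[ℝ] H))).sub hX) fun x => ?_
  have h1 : ⟪X x, x⟫ ≤ ‖x‖ ^ 2 := by
    calc ⟪X x, x⟫ ≤ ‖X x‖ * ‖x‖ := real_inner_le_norm _ _
    _ ≤ (‖X‖ * ‖x‖) * ‖x‖ := by
        have := X.le_opNorm x
        nlinarith [norm_nonneg x, norm_nonneg (X x)]
    _ ≤ ‖x‖ ^ 2 := by nlinarith [norm_nonneg x, sq_nonneg (‖x‖)]
  have : ⟪(1 - X) x, x⟫ = ‖x‖ ^ 2 - ⟪X x, x⟫ := by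
    rw [ContinuousLinearMap.sub_apply, inner_sub_left, ContinuousLinearMap.one_apply,
      real_inner_self_eq_norm_sq]
  rw [this]
  linarith

lemma isUnit_of_sq {M : Type*} [Monoid M] {a : M} (h : IsUnit (a * a)) : IsUnit a := by
  obtain ⟨u, hu⟩ := h
  have h1 : a * (a * ↑u⁻¹) = 1 := by rw [← mul_assoc, ← hu, Units.mul_inv]
  have h2 : (↑u⁻¹ * a) * a = 1 := by rw [mul_assoc, ← hu, Units.inv_mul]
  have heq : (a * ↑u⁻¹ : M) = ↑u⁻¹ * a := by
    calc (a * ↑u⁻¹ : M) = ((↑u⁻¹ * a) * a) * (a * ↑u⁻¹) := by rw [h2, one_mul]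
    _ = (↑u⁻¹ * a) * (a * (a * ↑u⁻¹)) := by simp only [mul_assoc]
    _ = ↑u⁻¹ * a := by rw [h1, mul_one]
  exact ⟨⟨a, a * ↑u⁻¹, h1, by rw [heq, h2]⟩, rfl⟩

/-- Product of commuting positive operators is positive (von Neumann's iteration proof). -/
lemma mul_pos_inner {E F : H →L[ℝ] H} (hE : E.IsPositive) (hF : F.IsPositive)
    (hEF : E * F = F * E) (x : H) : 0 ≤ ⟪(F * E) x, x⟫ := by
  rcases eq_or_ne E 0 with rfl | hE0
  · simp
  have hc : (0:ℝ) < ‖E‖ := norm_pos_iff.mpr hE0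
  set c : ℝ := ‖E‖ with hcdef
  set g : ℕ → (H →L[ℝ] H) := fun n => (fun X => X - X * X)^[n] (c⁻¹ • E) with hg
  have hg0 : g 0 = c⁻¹ • E := rfl
  have hgsucc : ∀ n, g (n + 1) = g n - g n * g n := by
    intro n
    simp only [hg, Function.iterate_succ_apply']
  -- invariant
  have hInv : ∀ n, (g n).IsPositive ∧ (1 - g n).IsPositive ∧ g n * F = F * g n := by
    intro n
    induction n with
    | zero =>
      refine ⟨smul_pos hE (by positivity), ?_, ?_⟩
      · refine one_sub_pos (smul_sa hE.isSelfAdjoint _) ?_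
        rw [hg0, norm_smul c⁻¹ E, Real.norm_eq_abs, abs_of_nonneg (by positivity : (0:ℝ) ≤ c⁻¹)]
        rw [← hcdef, inv_mul_cancel₀ (ne_of_gt hc)]
      · rw [hg0, smul_mul_assoc, mul_smul_comm, hEF]
    | succ n ih =>
      obtain ⟨h1, h2, h3⟩ := ih
      set X := g n
      have hXsa : IsSelfAdjoint X := h1.isSelfAdjoint
      have hid : X - X * X = X * (1 - X) * X + (1 - X) * X * (1 - X) := by noncomm_ring
      have hpos : (X - X * X).IsPositive := by
        rw [hid]
        exact (conj_pos h2 hXsa).add (conj_pos h1 h2.isSelfAdjoint)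
      have hid2 : 1 - (X - X * X) = (1 - X) + X * X := by noncomm_ring
      refine ⟨by rw [hgsucc]; exact hpos, ?_, ?_⟩
      · rw [hgsucc, hid2]
        exact h2.add (sq_pos hXsa)
      · rw [hgsucc]
        rw [sub_mul, mul_sub, h3, mul_assoc, h3, ← mul_assoc, h3, mul_assoc]
  -- telescoping
  have htel : ∀ n, g n - g (n + 1) = g n * g n := by
    intro n; rw [hgsucc]; abel
  have hterm : ∀ n, ⟪g n x, x⟫ - ⟪g (n+1) x, x⟫ = ‖g n x‖ ^ 2 := by
    intro n
    have : ⟪(g n - g (n+1)) x, x⟫ = ‖g n x‖ ^ 2 := by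
      rw [htel n, ContinuousLinearMap.mul_apply, symm (hInv n).1.isSelfAdjoint,
        real_inner_self_eq_norm_sq]
    rw [← this, ContinuousLinearMap.sub_apply, inner_sub_left]
  have hbound : ∀ n, (∑ k ∈ Finset.range n, ‖g k x‖ ^ 2) ≤ ⟪g 0 x, x⟫ := by
    intro n
    have hsum : (∑ k ∈ Finset.range n, ‖g k x‖ ^ 2) = ⟪g 0 x, x⟫ - ⟪g n x, x⟫ := by
      rw [← Finset.sum_range_sub' (fun k => ⟪g k x, x⟫) n]
      exact Finset.sum_congr rfl fun k _ => (hterm k).symm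
    rw [hsum]
    have := inner_nonneg (hInv n).1 x
    linarith
  have hsummable : Summable (fun k => ‖g k x‖ ^ 2) :=
    summable_of_sum_range_le (fun k => by positivity) hbound
  have hzero : Filter.Tendsto (fun n => ‖g n x‖ ^ 2) Filter.atTop (nhds 0) :=
    hsummable.tendsto_atTop_zero
  have hnzero : Filter.Tendsto (fun n => ‖g n x‖) Filter.atTop (nhds 0) := by
    have := hzero.sqrt
    simpa [Real.sqrt_sq (norm_nonneg _)] using this
  -- partial expansion of ⟪F (g 0 x), x⟫
  have hstep : ∀ n, ⟪F (g 0 x), x⟫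
      = (∑ k ∈ Finset.range n, ⟪F (g k x), g k x⟫) + ⟪F (g n x), x⟫ := by
    intro n
    induction n with
    | zero => simp
    | succ n ih =>
      rw [ih, Finset.sum_range_succ]
      have happ : g n x = (g n * g n) x + g (n+1) x := by
        rw [hgsucc n]
        simp only [ContinuousLinearMap.sub_apply]
        abel
      have : ⟪F (g n x), x⟫ = ⟪F (g n x), g n x⟫ + ⟪F (g (n+1) x), x⟫ := by
        nth_rewrite 1 [happ]
        rw [map_add, inner_add_left]
        congr 1
        have hcomm : F ((g n) ((g n) x)) = (g n) (F ((g n) x)) := by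
          have hop : F * (g n * g n) = g n * (F * g n) := by
            calc F * (g n * g n) = (F * g n) * g n := (mul_assoc _ _ _).symm
            _ = (g n * F) * g n := by rw [(hInv n).2.2]
            _ = g n * (F * g n) := mul_assoc _ _ _
          calc F ((g n) ((g n) x)) = (F * (g n * g n)) x := by simp [ContinuousLinearMap.mul_apply]
          _ = (g n * (F * g n)) x := by rw [hop]
          _ = (g n) (F ((g n) x)) := by simp [ContinuousLinearMap.mul_apply]
        rw [ContinuousLinearMap.mul_apply, hcomm, symm (hInv n).1.isSelfAdjoint]
      linarith [this]
  have hmono : ∀ n, ⟪F (g n x), x⟫ ≤ ⟪F (g 0 x), x⟫ := by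
    intro n
    rw [hstep n]
    have : 0 ≤ ∑ k ∈ Finset.range n, ⟪F (g k x), g k x⟫ :=
      Finset.sum_nonneg fun k _ => inner_nonneg hF _
    linarith
  have hb : ∀ n, ‖⟪F (g n x), x⟫‖ ≤ ‖F‖ * ‖x‖ * ‖g n x‖ := by
    intro n
    calc ‖⟪F (g n x), x⟫‖ ≤ ‖F (g n x)‖ * ‖x‖ := by
          simpa using abs_real_inner_le_norm (F (g n x)) x
    _ ≤ (‖F‖ * ‖g n x‖) * ‖x‖ := by
          have := F.le_opNorm (g n x)
          nlinarith [norm_nonneg x]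
    _ = ‖F‖ * ‖x‖ * ‖g n x‖ := by ring
  have htendsto : Filter.Tendsto (fun n => ⟪F (g n x), x⟫) Filter.atTop (nhds 0) :=
    squeeze_zero_norm hb (by simpa using hnzero.const_mul (‖F‖ * ‖x‖))
  have hmain : 0 ≤ ⟪F (g 0 x), x⟫ :=
    le_of_tendsto htendsto (Filter.Eventually.of_forall hmono)
  have hfinal : ⟪(F * E) x, x⟫ = c * ⟪F (g 0 x), x⟫ := by
    rw [hg0]
    simp [ContinuousLinearMap.mul_apply, real_inner_smul_left]
    rw [← mul_assoc, mul_inv_cancel₀ (ne_of_gt hc), one_mul]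
  rw [hfinal]
  exact mul_nonneg (le_of_lt hc) hmain

/-- Uniqueness of the positive square root (given invertibility of one of them). -/
lemma sq_unique {P Q : H →L[ℝ] H} (hP : P.IsPositive) (hQ : Q.IsPositive) (hPu : IsUnit P)
    (h : P * P = Q * Q) : P = Q := by
  set D := P - Q with hDdef
  set F := P + Q with hFdef
  have hDsa : IsSelfAdjoint D := hP.isSelfAdjoint.sub hQ.isSelfAdjoint
  have hFpos : F.IsPositive := hP.add hQ
  have hEpos : (D * D).IsPositive := sq_pos hDsa
  have hanti : F * D = -(D * F) := by
    have key : F * D + D * F = (P * P - Q * Q) + (P * P - Q * Q) := by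
      rw [hFdef, hDdef]; noncomm_ring
    rw [h, sub_self, add_zero] at key
    exact eq_neg_of_add_eq_zero_left key
  have hDF : D * F = -(F * D) := by rw [hanti, neg_neg]
  have hcommEF : (D * D) * F = F * (D * D) := by
    calc (D * D) * F = D * (D * F) := mul_assoc _ _ _
    _ = D * (-(F * D)) := by rw [hDF]
    _ = -((D * F) * D) := by rw [mul_neg, mul_assoc]
    _ = (-(D * F)) * D := by rw [neg_mul]
    _ = (F * D) * D := by rw [← hanti]
    _ = F * (D * D) := mul_assoc _ _ _
  have hFDD : F * (D * D) = -(D * (F * D)) := by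
    calc F * (D * D) = (F * D) * D := (mul_assoc _ _ _).symm
    _ = (-(D * F)) * D := by rw [hanti]
    _ = -((D * F) * D) := by rw [neg_mul]
    _ = -(D * (F * D)) := by rw [mul_assoc]
  have hkey : ∀ x, ⟪F (D x), D x⟫ = 0 := by
    intro x
    have h1 : 0 ≤ ⟪(F * (D * D)) x, x⟫ := mul_pos_inner hEpos hFpos hcommEF x
    have h2 : ⟪(F * (D * D)) x, x⟫ = -⟪F (D x), D x⟫ := by
      rw [hFDD]
      have : (-(D * (F * D))) x = -(D (F (D x))) := by
        simp [ContinuousLinearMap.mul_apply]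
      rw [this, inner_neg_left, symm hDsa]
    have h3 := inner_nonneg hFpos (D x)
    linarith [h1, h2 ▸ h1]
  have hDzero : ∀ x, D x = 0 := by
    intro x
    have h1 : 0 ≤ ⟪P (D x), D x⟫ := inner_nonneg hP _
    have h2 : 0 ≤ ⟪Q (D x), D x⟫ := inner_nonneg hQ _
    have h3 : ⟪F (D x), D x⟫ = ⟪P (D x), D x⟫ + ⟪Q (D x), D x⟫ := by
      rw [hFdef]
      rw [ContinuousLinearMap.add_apply, inner_add_left]
    have h4 : ⟪P (D x), D x⟫ = 0 := by
      have := hkey x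
      linarith [h3 ▸ this]
    have hP0 : P (D x) = 0 := apply_eq_zero_of_inner_self_eq_zero hP h4
    have h5 : (↑hPu.unit⁻¹ : H →L[ℝ] H) (P (D x)) = D x := by
      have : ((↑hPu.unit⁻¹ : H →L[ℝ] H) * P) (D x) = D x := by
        rw [IsUnit.val_inv_mul, ContinuousLinearMap.one_apply]
      rwa [ContinuousLinearMap.mul_apply] at this
    rw [hP0, map_zero] at h5
    exact h5.symm
  have : D = 0 := ContinuousLinearMap.ext fun x => by
    rw [hDzero x, ContinuousLinearMap.zero_apply]
  rw [hDdef] at this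
  rw [sub_eq_zero] at this
  exact this

lemma isUnit_add_one {S : H →L[ℝ] H} (hS : S.IsPositive) : IsUnit (S + 1) := by
  set A := S + 1 with hAdef
  have hlow : ∀ x : H, ‖x‖ ^ 2 ≤ ⟪A x, x⟫ := by
    intro x
    have h0 := inner_nonneg hS x
    have : ⟪A x, x⟫ = ⟪S x, x⟫ + ‖x‖ ^ 2 := by
      rw [hAdef, ContinuousLinearMap.add_apply, inner_add_left, ContinuousLinearMap.one_apply,
        real_inner_self_eq_norm_sq]
    rw [this]
    linarith
  have hbound : ∀ x : H, ‖x‖ ≤ (1 : ℝ≥0) * ‖A x‖ := by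
    intro x
    by_cases hx : ‖x‖ = 0
    · rw [hx]; positivity
    · have hxpos : 0 < ‖x‖ := lt_of_le_of_ne (norm_nonneg x) (Ne.symm hx)
      have h1 := hlow x
      have h2 : ⟪A x, x⟫ ≤ ‖A x‖ * ‖x‖ := real_inner_le_norm _ _
      have : ‖x‖ ^ 2 ≤ ‖A x‖ * ‖x‖ := le_trans h1 h2
      rw [NNReal.coe_one, one_mul]
      nlinarith
  have hanti : AntilipschitzWith 1 A := A.antilipschitz_of_bound hbound
  have hinj : Function.Injective A := hanti.injective
  rw [ContinuousLinearMap.isUnit_iff_bijective]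
  refine ⟨hinj, ?_⟩
  have hclosed : IsClosed (Set.range A) := hanti.isClosed_range A.uniformContinuous
  haveI hcs : CompleteSpace (LinearMap.range (A : H →ₗ[ℝ] H)) := by
    apply IsClosed.completeSpace_coe (s := (LinearMap.range (A : H →ₗ[ℝ] H) : Set H)) (hs := ?_)
    have : (LinearMap.range (A : H →ₗ[ℝ] H) : Set H) = Set.range ⇑A := by
      ext y
      simp [LinearMap.mem_range]
    rw [this]
    exact hclosed
  have horto : (LinearMap.range (A : H →ₗ[ℝ] H))ᗮ = ⊥ := by
    rw [Submodule.eq_bot_iff]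
    intro x hx
    have h0 : ⟪A x, x⟫ = 0 := hx (A x) (LinearMap.mem_range_self _ x)
    have h1 := hlow x
    have : ‖x‖ ^ 2 ≤ 0 := by rw [h0] at h1; exact h1
    have : ‖x‖ = 0 := by nlinarith [norm_nonneg x]
    exact norm_eq_zero.mp this
  have hrange : LinearMap.range (A : H →ₗ[ℝ] H) = ⊤ := Submodule.orthogonal_eq_bot_iff.mp horto
  exact LinearMap.range_eq_top.mp hrange

/-- Schauder: the adjoint of a compact operator on a Hilbert space is compact. -/
lemma adjoint_compact {K : H →L[ℝ] H} (hK : IsCompactOperator ⇑K) :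
    IsCompactOperator ⇑(ContinuousLinearMap.adjoint K) := by
  classical
  set Kd := ContinuousLinearMap.adjoint K with hKddef
  set A := K ∘L Kd with hAdef
  have hAc : IsCompactOperator ⇑A := by
    have := hK.comp_clm Kd
    rwa [← ContinuousLinearMap.coe_comp'] at this
  set B := Metric.closedBall (0 : H) 1 with hBdef
  have hAcompact : IsCompact (closure (⇑A '' B)) :=
    hAc.isCompact_closure_image_closedBall 1
  have hAtb : TotallyBounded (⇑A '' B) :=
    TotallyBounded.subset subset_closure hAcompact.totallyBounded
  have hkb : ∀ u : H, ‖Kd u‖ ^ 2 ≤ ‖A u‖ * ‖u‖ := by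
    intro u
    have h1 : ⟪Kd u, Kd u⟫ = ⟪A u, u⟫ := by
      rw [hKddef, ContinuousLinearMap.adjoint_inner_left]
      rw [hAdef, ContinuousLinearMap.coe_comp', Function.comp_apply, real_inner_comm]
    have h2 : ⟪A u, u⟫ ≤ ‖A u‖ * ‖u‖ := real_inner_le_norm _ _
    rw [← real_inner_self_eq_norm_sq, h1]
    exact h2
  have htb : TotallyBounded (⇑Kd '' B) := by
    rw [Metric.totallyBounded_iff]
    intro ε hε
    set δ := ε ^ 2 / 16 with hδdef
    have hδpos : 0 < δ := by positivity
    obtain ⟨t, htfin, hcov⟩ := Metric.totallyBounded_iff.mp hAtb δ hδpos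
    set t' := {c ∈ t | (Metric.ball c δ ∩ (⇑A '' B)).Nonempty} with ht'def
    have hch : ∀ c ∈ t', ∃ x, x ∈ B ∧ A x ∈ Metric.ball c δ := by
      intro c hc
      obtain ⟨y, hy1, x, hx, rfl⟩ := hc.2
      exact ⟨x, hx, hy1⟩
    choose! f hf1 hf2 using hch
    refine ⟨(fun c => Kd (f c)) '' t', (htfin.subset (Set.sep_subset _ _)).image _, ?_⟩
    rintro y ⟨x, hx, rfl⟩
    have hmem : A x ∈ ⋃ c ∈ t, Metric.ball c δ := hcov ⟨x, hx, rfl⟩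
    rw [Set.mem_iUnion₂] at hmem
    obtain ⟨c, hct, hc⟩ := hmem
    have hct' : c ∈ t' := ⟨hct, ⟨A x, hc, x, hx, rfl⟩⟩
    set x' := f c with hx'def
    have hx'B : x' ∈ B := hf1 c hct'
    have hx'ball : A x' ∈ Metric.ball c δ := hf2 c hct'
    have h1 : ‖A x - A x'‖ < 2 * δ := by
      have d1 : dist (A x) c < δ := hc
      have d2 : dist (A x') c < δ := hx'ball
      calc ‖A x - A x'‖ = dist (A x) (A x') := (dist_eq_norm _ _).symm
      _ ≤ dist (A x) c + dist c (A x') := dist_triangle _ _ _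
      _ = dist (A x) c + dist (A x') c := by rw [dist_comm c (A x')]
      _ < 2 * δ := by linarith
    have h2 : ‖x - x'‖ ≤ 2 := by
      have hxn : ‖x‖ ≤ 1 := by
        simpa [hBdef, dist_eq_norm] using Metric.mem_closedBall.mp hx
      have hx'n : ‖x'‖ ≤ 1 := by
        simpa [hBdef, dist_eq_norm] using Metric.mem_closedBall.mp hx'B
      calc ‖x - x'‖ ≤ ‖x‖ + ‖x'‖ := norm_sub_le _ _
      _ ≤ 2 := by linarith
    have h3 : ‖Kd x - Kd x'‖ ^ 2 ≤ ‖A x - A x'‖ * ‖x - x'‖ := by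
      have := hkb (x - x')
      rwa [map_sub, map_sub] at this
    have h4 : ‖Kd x - Kd x'‖ ^ 2 < ε ^ 2 / 2 := by
      have hAnn : 0 ≤ ‖A x - A x'‖ := norm_nonneg _
      have hxx : 0 ≤ ‖x - x'‖ := norm_nonneg _
      have : ‖A x - A x'‖ * ‖x - x'‖ ≤ (2 * δ) * 2 := by nlinarith
      have h2δ : (2 * δ) * 2 = ε ^ 2 / 4 := by rw [hδdef]; ring
      nlinarith
    rw [Set.mem_iUnion₂]
    refine ⟨Kd x', ⟨c, hct', rfl⟩, ?_⟩
    rw [Metric.mem_ball, dist_eq_norm]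
    nlinarith [norm_nonneg (Kd x - Kd x'), hε]
  have hcl : IsCompact (closure (⇑Kd '' B)) :=
    TotallyBounded.isCompact_of_isClosed htb.closure isClosed_closure
  have hfinal := (isCompactOperator_iff_isCompact_closure_image_closedBall
    (Kd : H →ₗ[ℝ] H) one_pos).mpr (by simpa [ContinuousLinearMap.coe_coe] using hcl)
  simpa [ContinuousLinearMap.coe_coe] using hfinal

end PolarAux

open PolarAux

/-- Let `T` be a bounded invertible operator commuting with the complex structure `J`,
with `T - I` compact and `T(L₀) = L₀` for a lagrangian `L₀`.  If `S` is the positive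
square root of `T*T` and `U = T S⁻¹` is the unitary part of the polar decomposition
`T = U S`, then `U` commutes with `J` and `U - I` is compact. -/
theorem polar_part_commutes_and_compact (J : H →L[ℝ] H)
    (hJ2 : J ∘L J = -1) (hJadj : ContinuousLinearMap.adjoint J = -J)
    (L₀ : Submodule ℝ H) (hL₀ : L₀.map (J : H →ₗ[ℝ] H) = L₀ᗮ)
    (T : H →L[ℝ] H) (hTinv : IsUnit T) (hTJ : T ∘L J = J ∘L T)
    (hTK : IsCompactOperator (⇑(T - 1))) (hTL₀ : L₀.map (T : H →ₗ[ℝ] H) = L₀)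
    (S U : H →L[ℝ] H) (hSpos : S.IsPositive)
    (hS2 : S * S = ContinuousLinearMap.adjoint T * T) (hUS : U * S = T) :
    U ∘L J = J ∘L U ∧ IsCompactOperator (⇑(U - 1)) := by
  have hTJ' : T * J = J * T := by rw [mul_def, mul_def]; exact hTJ
  have hJJ : J * J = -1 := by rw [mul_def]; exact hJ2
  -- adjoint T commutes with J
  have hTdJ : ContinuousLinearMap.adjoint T * J = J * ContinuousLinearMap.adjoint T := by
    have h := congrArg ContinuousLinearMap.adjoint hTJ
    rw [adjoint_comp, adjoint_comp, hJadj, neg_comp, comp_neg] at h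
    have h2 := neg_injective h
    rw [mul_def, mul_def]
    exact h2.symm
  have hATJ : (ContinuousLinearMap.adjoint T * T) * J
      = J * (ContinuousLinearMap.adjoint T * T) := by
    calc (ContinuousLinearMap.adjoint T * T) * J
        = ContinuousLinearMap.adjoint T * (T * J) := mul_assoc _ _ _
    _ = ContinuousLinearMap.adjoint T * (J * T) := by rw [hTJ']
    _ = (ContinuousLinearMap.adjoint T * J) * T := (mul_assoc _ _ _).symm
    _ = (J * ContinuousLinearMap.adjoint T) * T := by rw [hTdJ]
    _ = J * (ContinuousLinearMap.adjoint T * T) := mul_assoc _ _ _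
  -- S is a unit
  have hTdinv : IsUnit (ContinuousLinearMap.adjoint T) := by
    obtain ⟨u, hu⟩ := hTinv
    have hadj1 : ContinuousLinearMap.adjoint (1 : H →L[ℝ] H) = 1 := by
      rw [one_def]
      exact adjoint_id
    refine ⟨⟨ContinuousLinearMap.adjoint T, ContinuousLinearMap.adjoint ↑u⁻¹, ?_, ?_⟩, rfl⟩
    · rw [mul_def, ← adjoint_comp, ← mul_def, ← hu, Units.inv_mul]
      exact hadj1
    · rw [mul_def, ← adjoint_comp, ← mul_def, ← hu, Units.mul_inv]
      exact hadj1
  have hSS : IsUnit (S * S) := by rw [hS2]; exact hTdinv.mul hTinv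
  have hSu : IsUnit S := isUnit_of_sq hSS
  -- Q = -(J * S * J) is also a positive square root of adjoint T * T
  set Q : H →L[ℝ] H := -(J * (S * J)) with hQdef
  have hQpos : Q.IsPositive := by
    have h := hSpos.conj_adjoint J
    rw [hJadj, comp_neg, comp_neg] at h
    have h2 : Q = -(J ∘L (S ∘L J)) := by rw [hQdef, mul_def, mul_def]
    rw [h2]
    exact h
  have hQQ : S * S = Q * Q := by
    have step : Q * Q = (J * (S * J)) * (J * (S * J)) := by
      rw [hQdef, neg_mul_neg]
    calc S * S = ContinuousLinearMap.adjoint T * T := hS2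
    _ = -((ContinuousLinearMap.adjoint T * T) * (-1)) := by noncomm_ring
    _ = -((ContinuousLinearMap.adjoint T * T) * (J * J)) := by rw [hJJ]
    _ = -(((ContinuousLinearMap.adjoint T * T) * J) * J) := by noncomm_ring
    _ = -((J * (ContinuousLinearMap.adjoint T * T)) * J) := by rw [hATJ]
    _ = -(J * ((ContinuousLinearMap.adjoint T * T) * J)) := by noncomm_ring
    _ = -(J * ((S * S) * J)) := by rw [hS2]
    _ = J * ((S * ((-1) * S)) * J) := by noncomm_ring
    _ = J * ((S * ((J * J) * S)) * J) := by rw [hJJ]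
    _ = (J * (S * J)) * (J * (S * J)) := by noncomm_ring
    _ = Q * Q := step.symm
  have hSQ : S = Q := sq_unique hSpos hQpos hSu hQQ
  -- S commutes with J
  have hSJ : S * J = J * S := by
    calc S * J = Q * J := by rw [← hSQ]
    _ = -(J * (S * J)) * J := by rw [hQdef]
    _ = -(J * (S * (J * J))) := by noncomm_ring
    _ = -(J * (S * (-1))) := by rw [hJJ]
    _ = J * S := by noncomm_ring
  set Si : H →L[ℝ] H := ↑hSu.unit⁻¹ with hSidef
  have hSSi : S * Si = 1 := hSu.mul_val_inv
  have hSiS : Si * S = 1 := hSu.val_inv_mul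
  -- S⁻¹ commutes with J
  have hJs : Si * J = J * Si := by
    have h1 : Si * ((S * J) * Si) = (Si * S) * (J * Si) := by noncomm_ring
    have h2 : Si * ((J * S) * Si) = (Si * J) * (S * Si) := by noncomm_ring
    have h3 : Si * ((S * J) * Si) = Si * ((J * S) * Si) := by rw [hSJ]
    rw [h1, h2, hSiS, hSSi, one_mul, mul_one] at h3
    exact h3.symm
  have hUeq : U = T * Si := by
    rw [← hUS, mul_assoc, hSSi, mul_one]
  constructor
  · -- U commutes with J
    have : U * J = J * U := by
      calc U * J = T * Si * J := by rw [hUeq]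
      _ = T * (Si * J) := mul_assoc _ _ _
      _ = T * (J * Si) := by rw [hJs]
      _ = (T * J) * Si := (mul_assoc _ _ _).symm
      _ = (J * T) * Si := by rw [hTJ']
      _ = J * (T * Si) := mul_assoc _ _ _
      _ = J * U := by rw [← hUeq]
    rw [mul_def, mul_def] at this
    exact this
  · -- compactness of U - 1
    have hTd1 : ContinuousLinearMap.adjoint (T - 1) = ContinuousLinearMap.adjoint T - 1 := by
      rw [map_sub]
      congr 1
      rw [one_def, adjoint_id]
    have c2 : IsCompactOperator ⇑(ContinuousLinearMap.adjoint T - 1) := by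
      rw [← hTd1]
      exact adjoint_compact hTK
    have c1 : IsCompactOperator ⇑(ContinuousLinearMap.adjoint T * (T - 1)) := by
      have h := hTK.clm_comp (ContinuousLinearMap.adjoint T)
      rwa [← ContinuousLinearMap.coe_comp', ← mul_def] at h
    have hSS1 : S * S - 1
        = ContinuousLinearMap.adjoint T * (T - 1) + (ContinuousLinearMap.adjoint T - 1) := by
      rw [hS2]; noncomm_ring
    have hsq : IsCompactOperator ⇑(S * S - 1) := by
      rw [hSS1, ContinuousLinearMap.coe_add']
      exact c1.add c2
    have hA1 : IsUnit (S + 1) := isUnit_add_one hSpos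
    have hSm1eq : S - 1 = (S * S - 1) * ↑hA1.unit⁻¹ := by
      have h1 : (S - 1) * (S + 1) = S * S - 1 := by noncomm_ring
      rw [← h1, mul_assoc, hA1.mul_val_inv, mul_one]
    have hSm1 : IsCompactOperator ⇑(S - 1) := by
      rw [hSm1eq, mul_def, ContinuousLinearMap.coe_comp']
      exact hsq.comp_clm _
    have hUm1eq : U - 1 = ((T - 1) - (S - 1)) * Si := by
      have h1 : ((T - 1) - (S - 1)) * Si = T * Si - S * Si := by noncomm_ring
      rw [h1, hSSi, ← hUeq]
    rw [hUm1eq, mul_def, ContinuousLinearMap.coe_comp']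
    have hsub : IsCompactOperator ⇑((T - 1) - (S - 1)) := by
      rw [ContinuousLinearMap.coe_sub']
      exact hTK.sub hSm1
    exact hsub.comp_clm _
end

section
/- Let (L₀, L₁) be complementary lagrangians and let S, S' : L₀ → L₁ be bounded operators with graphs L = Gr(S) and L' = Gr(S'). If S - S' is compact, then P_{L'} - P_L is compact. -/
variable {H : Type*} [NormedAddCommGroup H] [InnerProductSpace ℝ H] [CompleteSpace H]

open Metric Set Filter Topology RealInnerProductSpace

lemma orthProj_mem (L : Submodule ℝ H) (hL : IsClosed (L : Set H)) (x : H) :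
    orthProj L hL x ∈ L := by
  haveI := hL.completeSpace_coe
  exact (L.orthogonalProjectionOnto x).2

lemma orthProj_eq_self (L : Submodule ℝ H) (hL : IsClosed (L : Set H)) {x : H} (hx : x ∈ L) :
    orthProj L hL x = x := by
  haveI := hL.completeSpace_coe
  exact Submodule.starProjection_eq_self_iff.mpr hx

lemma orthProj_isSelfAdjoint (L : Submodule ℝ H) (hL : IsClosed (L : Set H)) :
    IsSelfAdjoint (orthProj L hL) := by
  haveI := hL.completeSpace_coe
  exact isSelfAdjoint_starProjection L

/-- A self-adjoint operator whose square is compact is itself compact. -/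
lemma isCompactOperator_of_sq (A : H →L[ℝ] H) (hA : IsSelfAdjoint A)
    (h2 : IsCompactOperator ⇑(A ∘L A)) : IsCompactOperator ⇑A := by
  -- every bounded sequence has a subsequence whose image under A converges
  have key : ∀ x : ℕ → H, (∀ n, x n ∈ closedBall (0:H) 1) →
      ∃ φ : ℕ → ℕ, StrictMono φ ∧ ∃ a : H, Tendsto (fun n => A (x (φ n))) atTop (𝓝 a) := by
    intro x hx
    obtain ⟨K, hK, hKsub⟩ :=
      h2.image_subset_compact_of_bounded (𝕜₁ := ℝ) (f := (A ∘L A : H →ₗ[ℝ] H))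
        (isBounded_closedBall (x := (0:H)) (r := 1))
    have hmem : ∀ n, (A ∘L A) (x n) ∈ K := fun n => hKsub ⟨x n, hx n, rfl⟩
    obtain ⟨a2, _, φ, hφ, hconv⟩ := hK.isSeqCompact hmem
    refine ⟨φ, hφ, ?_⟩
    -- the sequence (A (x (φ n))) is Cauchy
    have hCauchy2 : CauchySeq (fun n => (A ∘L A) (x (φ n))) := hconv.cauchySeq
    have hCauchy : CauchySeq (fun n => A (x (φ n))) := by
      rw [Metric.cauchySeq_iff] at hCauchy2 ⊢
      intro ε hε
      obtain ⟨N, hN⟩ := hCauchy2 (ε ^ 2 / 2) (by positivity)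
      refine ⟨N, fun m hm n hn => ?_⟩
      have h1 := hN m hm n hn
      set u := x (φ m) - x (φ n) with hu
      have hnorm : ‖A u‖ ^ 2 = ⟪(A ∘L A) u, u⟫ := by
        have hsymm := hA.isSymmetric (A u) u
        simp only [ContinuousLinearMap.coe_coe] at hsymm
        simp only [ContinuousLinearMap.comp_apply]
        rw [hsymm, real_inner_self_eq_norm_sq]
      have hub : ‖u‖ ≤ 2 := by
        have h1' := mem_closedBall_iff_norm.mp (hx (φ m))
        have h2' := mem_closedBall_iff_norm.mp (hx (φ n))
        calc ‖u‖ ≤ ‖x (φ m) - 0‖ + ‖x (φ n) - 0‖ := by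
              simpa [hu] using norm_sub_le (x (φ m)) (x (φ n))
          _ ≤ 2 := by linarith
      have hAAu : ‖(A ∘L A) u‖ < ε ^ 2 / 2 := by
        have : (A ∘L A) u = (A ∘L A) (x (φ m)) - (A ∘L A) (x (φ n)) := by
          simp [hu, map_sub]
        rw [this, ← dist_eq_norm]
        exact h1
      have hsq : ‖A u‖ ^ 2 < ε ^ 2 := by
        calc ‖A u‖ ^ 2 = ⟪(A ∘L A) u, u⟫ := hnorm
          _ ≤ ‖(A ∘L A) u‖ * ‖u‖ := real_inner_le_norm _ _
          _ ≤ ‖(A ∘L A) u‖ * 2 := by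
              have : (0:ℝ) ≤ ‖(A ∘L A) u‖ := norm_nonneg _
              nlinarith
          _ < ε ^ 2 := by nlinarith
      have : ‖A u‖ < ε := by nlinarith [norm_nonneg (A u)]
      rw [dist_eq_norm, ← map_sub]
      exact this
    obtain ⟨a, ha⟩ := cauchySeq_tendsto_of_complete hCauchy
    exact ⟨a, ha⟩
  -- now conclude compactness
  rw [isCompactOperator_iff_exists_mem_nhds_isCompact_closure_image]
  refine ⟨closedBall 0 1, closedBall_mem_nhds _ one_pos, ?_⟩
  rw [isCompact_iff_isSeqCompact]
  intro y hy
  -- choose approximants in the image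
  have hchoice : ∀ n : ℕ, ∃ z ∈ ⇑A '' closedBall (0:H) 1, dist (y n) z < 1 / (n + 1) := by
    intro n
    exact Metric.mem_closure_iff.mp (hy n) _ (by positivity)
  choose z hz hzd using hchoice
  choose x hx hxz using fun n => (Set.mem_image _ _ _).mp (hz n)
  obtain ⟨φ, hφ, a, ha⟩ := key x hx
  refine ⟨a, ?_, φ, hφ, ?_⟩
  · exact mem_closure_of_tendsto ha (Filter.Eventually.of_forall fun n =>
      ⟨x (φ n), hx (φ n), rfl⟩)
  · -- y ∘ φ → a since dist (y n) (A x n) → 0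
    have hd : Tendsto (fun n => dist (y (φ n)) (A (x (φ n)))) atTop (𝓝 0) := by
      have hb : Tendsto (fun n : ℕ => 1 / ((φ n : ℝ) + 1)) atTop (𝓝 0) :=
        (tendsto_one_div_add_atTop_nhds_zero_nat).comp
          (hφ.tendsto_atTop.comp tendsto_id) |>.congr (fun n => by simp)
      refine squeeze_zero (fun n => dist_nonneg) (fun n => ?_) hb
      have := hzd (φ n)
      rw [← hxz (φ n)] at this
      exact this.le
    have : Tendsto (fun n => y (φ n)) atTop (𝓝 a) := by
      rw [tendsto_iff_dist_tendsto_zero]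
      have hAd : Tendsto (fun n => dist (A (x (φ n))) a) atTop (𝓝 0) := by
        rwa [tendsto_iff_dist_tendsto_zero] at ha
      refine squeeze_zero (g := fun n => dist (y (φ n)) (A (x (φ n))) + dist (A (x (φ n))) a)
        (fun n => dist_nonneg) (fun n => dist_triangle _ _ _) ?_
      simpa using hd.add hAd
    exact this

/-- Key lemma: `(1 - P_{L'}) ∘ P_L` is compact when the graph difference is compact. -/
lemma key_compact (L₀ L₁ : Submodule ℝ H)
    (hL₀c : IsClosed (L₀ : Set H)) (hL₁c : IsClosed (L₁ : Set H))
    (hcompl : IsCompl L₀ L₁)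
    (S S' : ↥L₀ →L[ℝ] H) (hS : ∀ u : ↥L₀, S u ∈ L₁) (hS' : ∀ u : ↥L₀, S' u ∈ L₁)
    (L L' : Submodule ℝ H)
    (hL : L = LinearMap.range ((L₀.subtypeL + S : ↥L₀ →L[ℝ] H) : ↥L₀ →ₗ[ℝ] H)) (hL' : L' = LinearMap.range ((L₀.subtypeL + S' : ↥L₀ →L[ℝ] H) : ↥L₀ →ₗ[ℝ] H))
    (hLc : IsClosed (L : Set H)) (hL'c : IsClosed (L' : Set H))
    (hcpt : IsCompactOperator (⇑(S - S'))) :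
    IsCompactOperator ⇑((1 - orthProj L' hL'c) ∘L orthProj L hLc) := by
  set P := orthProj L hLc
  set P' := orthProj L' hL'c
  set π₀ : H →L[ℝ] L₀ := L₀.linearProjOfClosedCompl L₁ hcompl hL₀c hL₁c
  have hfun : ⇑((1 - P') ∘L P) = ⇑(1 - P') ∘ ⇑(S - S') ∘ ⇑(π₀ ∘L P) := by
    funext x
    have hmemL : P x ∈ L := orthProj_mem L hLc x
    rw [hL] at hmemL
    obtain ⟨u, hu⟩ := hmemL
    have hu' : (u : H) + S u = P x := hu
    have hπ : π₀ (P x) = u := by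
      rw [← hu']
      have h1 : π₀ ((u : H)) = u := by
        simpa [π₀, Submodule.coe_continuous_linearProjOfClosedCompl'] using
          Submodule.linearProjOfIsCompl_apply_left hcompl u
      have h2 : π₀ (S u) = 0 := by
        simpa [π₀, Submodule.coe_continuous_linearProjOfClosedCompl'] using
          Submodule.linearProjOfIsCompl_apply_right hcompl ⟨S u, hS u⟩
      rw [map_add, h1, h2, add_zero]
    have hmemL' : (u : H) + S' u ∈ L' := by
      rw [hL']
      exact ⟨u, rfl⟩
    have hP'fix : P' ((u : H) + S' u) = (u : H) + S' u := orthProj_eq_self L' hL'c hmemL'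
    simp only [Function.comp_apply, ContinuousLinearMap.comp_apply]
    rw [hπ]
    simp only [ContinuousLinearMap.sub_apply, ContinuousLinearMap.one_apply]
    rw [← hu']
    have : P' ((u : H) + S u) = ((u : H) + S' u) + P' (S u - S' u) := by
      rw [← hP'fix, ← map_add]
      congr 1
      abel
    rw [this]
    abel
  rw [hfun]
  exact (hcpt.comp_clm (π₀ ∘L P)).clm_comp (1 - P')

/-- Let `(L₀, L₁)` be complementary closed subspaces and `S, S' : L₀ → L₁` bounded
operators with graphs `L = Gr(S)`, `L' = Gr(S')`.  If `S - S'` is compact, then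
`P_{L'} - P_L` is compact. -/
theorem graph_compact_perturbation (L₀ L₁ : Submodule ℝ H)
    (hL₀c : IsClosed (L₀ : Set H)) (hL₁c : IsClosed (L₁ : Set H))
    (hcompl₁ : L₀ ⊓ L₁ = ⊥) (hcompl₂ : L₀ ⊔ L₁ = ⊤)
    (S S' : ↥L₀ →L[ℝ] H) (hS : ∀ u : ↥L₀, S u ∈ L₁) (hS' : ∀ u : ↥L₀, S' u ∈ L₁)
    (L L' : Submodule ℝ H)
    (hL : L = LinearMap.range ((L₀.subtypeL + S : ↥L₀ →L[ℝ] H) : ↥L₀ →ₗ[ℝ] H)) (hL' : L' = LinearMap.range ((L₀.subtypeL + S' : ↥L₀ →L[ℝ] H) : ↥L₀ →ₗ[ℝ] H))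
    (hLc : IsClosed (L : Set H)) (hL'c : IsClosed (L' : Set H))
    (hcpt : IsCompactOperator (⇑(S - S'))) :
    IsCompactOperator (⇑(orthProj L' hL'c - orthProj L hLc)) := by
  have hcompl : IsCompl L₀ L₁ := ⟨disjoint_iff.mpr hcompl₁, codisjoint_iff.mpr hcompl₂⟩
  set P := orthProj L hLc
  set P' := orthProj L' hL'c
  have hcpt' : IsCompactOperator (⇑(S' - S)) := by
    have : ⇑(S' - S) = -⇑(S - S') := by ext x; simp
    rw [this]
    exact hcpt.neg
  have hB : IsCompactOperator ⇑((1 - P') ∘L P) :=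
    key_compact L₀ L₁ hL₀c hL₁c hcompl S S' hS hS' L L' hL hL' hLc hL'c hcpt
  have hB' : IsCompactOperator ⇑((1 - P) ∘L P') :=
    key_compact L₀ L₁ hL₀c hL₁c hcompl S' S hS' hS L' L hL' hL hL'c hLc hcpt'
  set A := P' - P with hA_def
  have hA : IsSelfAdjoint A :=
    (orthProj_isSelfAdjoint L' hL'c).sub (orthProj_isSelfAdjoint L hLc)
  have hsq : ⇑(A ∘L A) = fun x => ((1 - P') ∘L P) x + ((1 - P) ∘L P') x := by
    funext x
    have hPP : P (P x) = P x := orthProj_eq_self L hLc (orthProj_mem L hLc x)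
    have hP'P' : P' (P' x) = P' x := orthProj_eq_self L' hL'c (orthProj_mem L' hL'c x)
    simp only [hA_def, ContinuousLinearMap.comp_apply, ContinuousLinearMap.sub_apply,
      ContinuousLinearMap.one_apply, map_sub, hPP, hP'P']
    abel
  have h2 : IsCompactOperator ⇑(A ∘L A) := by
    rw [hsq]
    exact hB.add hB'
  exact isCompactOperator_of_sq A hA h2
end

section
/- Let L₀ be a lagrangian in the symplectic Hilbert space H with complex structure J. The map sending a self-adjoint bounded operator A on L₀⊥ to the lagrangian Gr(-J A) = {u - JAu : u ∈ L₀⊥} is a bijection between the space of bounded self-adjoint operators on L₀⊥ and the set Λ₀(L₀) of lagrangians complementary to L₀. -/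
open RealInnerProductSpace


variable {H : Type*} [NormedAddCommGroup H] [InnerProductSpace ℝ H] [CompleteSpace H]

/-- Let `L₀` be a lagrangian in the symplectic Hilbert space `H` with complex structure
`J`.  The map sending a bounded self-adjoint operator `A` on `L₀ᗮ` to
`Gr(-J A) = {u - J A u : u ∈ L₀ᗮ}` is a bijection between the bounded self-adjoint
operators on `L₀ᗮ` and the set of lagrangians complementary to `L₀`: it is injective,
every `Gr(-JA)` is a lagrangian complementary to `L₀`, and every lagrangian
complementary to `L₀` arises this way. -/
theorem chart_bijection (J : H →L[ℝ] H)
    (hJ2 : J ∘L J = -1) (hJadj : ContinuousLinearMap.adjoint J = -J)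
    (L₀ : Submodule ℝ H) (hL₀ : L₀.map (J : H →ₗ[ℝ] H) = L₀ᗮ) :
    haveI : CompleteSpace ↥L₀ᗮ := L₀.isClosed_orthogonal.completeSpace_coe
    let Gr : (↥L₀ᗮ →L[ℝ] ↥L₀ᗮ) → Submodule ℝ H := fun A =>
      LinearMap.range ((L₀ᗮ.subtypeL - J ∘L (L₀ᗮ.subtypeL ∘L A) : ↥L₀ᗮ →L[ℝ] H) : ↥L₀ᗮ →ₗ[ℝ] H)
    (∀ A B : ↥L₀ᗮ →L[ℝ] ↥L₀ᗮ, IsSelfAdjoint A → IsSelfAdjoint B →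
        Gr A = Gr B → A = B) ∧
    (∀ A : ↥L₀ᗮ →L[ℝ] ↥L₀ᗮ, IsSelfAdjoint A →
        (Gr A).map (J : H →ₗ[ℝ] H) = (Gr A)ᗮ ∧ Gr A ⊓ L₀ = ⊥ ∧ Gr A ⊔ L₀ = ⊤) ∧
    (∀ L : Submodule ℝ H, L.map (J : H →ₗ[ℝ] H) = Lᗮ → L ⊓ L₀ = ⊥ → L ⊔ L₀ = ⊤ →
        ∃ A : ↥L₀ᗮ →L[ℝ] ↥L₀ᗮ, IsSelfAdjoint A ∧ L = Gr A) := by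
  haveI : CompleteSpace ↥L₀ᗮ := L₀.isClosed_orthogonal.completeSpace_coe
  intro Gr
  -- Basic consequences of the hypotheses on `J`.
  have hJJ : ∀ x : H, J (J x) = -x := by
    intro x
    have := congrArg (fun f : H →L[ℝ] H => f x) hJ2
    simpa using this
  have hJinj : ∀ x : H, J x = 0 → x = 0 := by
    intro x hx
    have := hJJ x
    rw [hx] at this
    simpa using this.symm
  have hJinner : ∀ x y : H, ⟪J x, y⟫ = -⟪x, J y⟫ := by
    intro x y
    rw [← ContinuousLinearMap.adjoint_inner_right J x y, hJadj]
    simp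
  have hJorth : ∀ x y : H, ⟪J x, J y⟫ = ⟪x, y⟫ := by
    intro x y
    rw [hJinner, hJJ]
    simp
  -- `J` maps `L₀ᗮ` onto `L₀`.
  have hmemJ : ∀ x : H, x ∈ L₀ → J x ∈ L₀ᗮ := by
    intro x hx
    rw [← hL₀]
    exact Submodule.mem_map_of_mem hx
  have hmemJ' : ∀ x : H, x ∈ L₀ᗮ → J x ∈ L₀ := by
    intro x hx
    rw [← hL₀] at hx
    obtain ⟨p, hp, rfl⟩ := hx
    show J (J p) ∈ L₀
    rw [hJJ p]
    exact neg_mem hp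
  -- `L₀` is closed.
  have hL₀closed : IsClosed (L₀ : Set H) := by
    have : (L₀ : Set H) = (⇑J) ⁻¹' (L₀ᗮ : Set H) := by
      ext x
      constructor
      · intro hx; exact hmemJ x hx
      · intro hx
        have : J (J x) ∈ L₀ := hmemJ' _ hx
        rw [hJJ x] at this
        simpa using neg_mem this
    rw [this]
    exact L₀.isClosed_orthogonal.preimage J.continuous
  haveI : CompleteSpace ↥L₀ := hL₀closed.completeSpace_coe
  -- orthogonality pairing facts
  have horto : ∀ p q : H, p ∈ L₀ → q ∈ L₀ᗮ → ⟪p, q⟫ = 0 := by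
    intro p q hp hq
    exact (Submodule.mem_orthogonal L₀ q).1 hq p hp
  have horto' : ∀ p q : H, p ∈ L₀ᗮ → q ∈ L₀ → ⟪p, q⟫ = 0 := by
    intro p q hp hq
    rw [real_inner_comm]
    exact horto q p hq hp
  have hdisj : ∀ x : H, x ∈ L₀ → x ∈ L₀ᗮ → x = 0 := by
    intro x h1 h2
    have := horto x x h1 h2
    exact inner_self_eq_zero.1 this
  -- orthogonal decomposition
  have hdecomp : ∀ x : H, ∃ p ∈ L₀, ∃ q ∈ L₀ᗮ, x = p + q :=
    fun x => L₀.exists_add_mem_mem_orthogonal x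
  -- membership in Gr A
  have hmemGr : ∀ (A : ↥L₀ᗮ →L[ℝ] ↥L₀ᗮ) (x : H),
      x ∈ Gr A ↔ ∃ u : ↥L₀ᗮ, (u : H) - J (A u : H) = x := by
    intro A x
    simp [Gr, LinearMap.mem_range, ContinuousLinearMap.sub_apply,
      ContinuousLinearMap.comp_apply]
  -- Part 1: injectivity
  have part1 : ∀ A B : ↥L₀ᗮ →L[ℝ] ↥L₀ᗮ, Gr A = Gr B → A = B := by
    intro A B hAB
    ext u
    have hx : ((u : H) - J (A u : H)) ∈ Gr B := by
      rw [← hAB]; exact (hmemGr A _).2 ⟨u, rfl⟩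
    obtain ⟨v, hv⟩ := (hmemGr B _).1 hx
    have key : (u : H) - (v : H) = J ((A u : H) - (B v : H)) := by
      rw [map_sub]
      have h := sub_eq_sub_iff_sub_eq_sub.1 hv
      have h2 := congrArg Neg.neg h
      rw [neg_sub, neg_sub] at h2
      exact h2
    have h1 : (u : H) - (v : H) ∈ L₀ᗮ := sub_mem u.2 v.2
    have h2 : (u : H) - (v : H) ∈ L₀ := by
      rw [key]; exact hmemJ' _ (sub_mem (A u).2 (B v).2)
    have h0 : (u : H) - (v : H) = 0 := hdisj _ h2 h1
    have hJ0 : J ((A u : H) - (B v : H)) = 0 := by rw [← key, h0]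
    have hABv : (A u : H) = (B v : H) := by
      have := hJinj _ hJ0; rwa [sub_eq_zero] at this
    have huv : v = u := Subtype.ext (by
      have : (u : H) = (v : H) := by rwa [sub_eq_zero] at h0
      exact this.symm)
    rw [hABv, huv]
  -- Part 2
  have part2 : ∀ A : ↥L₀ᗮ →L[ℝ] ↥L₀ᗮ, IsSelfAdjoint A →
      (Gr A).map (J : H →ₗ[ℝ] H) = (Gr A)ᗮ ∧ Gr A ⊓ L₀ = ⊥ ∧ Gr A ⊔ L₀ = ⊤ := by
    intro A hA
    have hAsym : ∀ u v : ↥L₀ᗮ, ⟪(A u : H), (v : H)⟫ = ⟪(u : H), (A v : H)⟫ := by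
      intro u v
      have := (ContinuousLinearMap.isSelfAdjoint_iff_isSymmetric.1 hA) u v
      simpa [Submodule.coe_inner] using this
    refine ⟨?_, ?_, ?_⟩
    · -- lagrangian
      ext x
      constructor
      · rintro ⟨y, hy, rfl⟩
        obtain ⟨u, hu⟩ := (hmemGr A y).1 hy
        rw [Submodule.mem_orthogonal]
        intro z hz
        obtain ⟨v, hv⟩ := (hmemGr A z).1 hz
        have e1 : (J : H →ₗ[ℝ] H) y = J (u : H) + (A u : H) := by
          show J y = _
          rw [← hu, map_sub, hJJ, sub_neg_eq_add]
        rw [← hv, e1, inner_sub_left, inner_add_right, inner_add_right]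
        have t1 := horto' (v : H) (J (u : H)) v.2 (hmemJ' _ u.2)
        have t2 := hJorth (A v : H) (u : H)
        have t3 := horto (J (A v : H)) (A u : H) (hmemJ' _ (A v).2) (A u).2
        have t4 := hAsym v u
        rw [t1, t2, t3]
        linarith [t4]
      · intro hx
        obtain ⟨p, hp, q, hq, rfl⟩ := hdecomp x
        set w : ↥L₀ᗮ := ⟨J p, hmemJ p hp⟩ with hw
        have hqA : q + (A w : H) = 0 := by
          have hmem : q + (A w : H) ∈ L₀ᗮ := add_mem hq (A w).2
          have hperp : ∀ u : ↥L₀ᗮ, ⟪(u : H), q + (A w : H)⟫ = 0 := by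
            intro u
            have h0 : ⟪(u : H) - J (A u : H), p + q⟫ = 0 :=
              (Submodule.mem_orthogonal _ _).1 hx _ ((hmemGr A _).2 ⟨u, rfl⟩)
            rw [inner_sub_left, inner_add_right, inner_add_right] at h0
            have t1 : ⟪(u : H), p⟫ = 0 := horto' _ _ u.2 hp
            have t2 : ⟪J (A u : H), q⟫ = 0 := horto _ _ (hmemJ' _ (A u).2) hq
            have t3 : ⟪J (A u : H), p⟫ = -⟪(A u : H), J p⟫ := hJinner _ _
            have t4 : ⟪(A u : H), J p⟫ = ⟪(u : H), (A w : H)⟫ := by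
              have := hAsym u w
              rw [← this]
            rw [inner_add_right]
            rw [t1, t2, t3, t4] at h0
            linarith
          have := hperp ⟨q + (A w : H), hmem⟩
          exact inner_self_eq_zero.1 this
        have hAwq : (A w : H) = -q := eq_neg_of_add_eq_zero_right hqA
        refine ⟨((-w : ↥L₀ᗮ) : H) - J ((A (-w) : ↥L₀ᗮ) : H), (hmemGr A _).2 ⟨-w, rfl⟩, ?_⟩
        have c1 : ((-w : ↥L₀ᗮ) : H) = -(J p) := rfl
        have c2 : ((A (-w) : ↥L₀ᗮ) : H) = q := by
          rw [map_neg]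
          show -((A w : ↥L₀ᗮ) : H) = q
          rw [hAwq, neg_neg]
        show J (((-w : ↥L₀ᗮ) : H) - J ((A (-w) : ↥L₀ᗮ) : H)) = p + q
        rw [c1, c2, map_sub, map_neg, hJJ p, hJJ q]
        abel
    · -- inf
      rw [eq_bot_iff]
      rintro x ⟨hx1, hx2⟩
      obtain ⟨u, hu⟩ := (hmemGr A x).1 hx1
      have hu0 : (u : H) ∈ L₀ := by
        have : (u : H) = x + J (A u : H) := by rw [← hu]; abel
        rw [this]
        exact add_mem hx2 (hmemJ' _ (A u).2)
      have hu' : u = 0 := Subtype.ext (hdisj _ hu0 u.2)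
      rw [hu'] at hu
      simp only [map_zero, ZeroMemClass.coe_zero, sub_zero] at hu
      rw [Submodule.mem_bot]
      exact hu.symm
    · -- sup
      rw [eq_top_iff]
      intro x _
      obtain ⟨p, hp, q, hq, rfl⟩ := hdecomp x
      apply Submodule.mem_sup.2
      refine ⟨q - J ((A ⟨q, hq⟩ : ↥L₀ᗮ) : H), (hmemGr A _).2 ⟨⟨q, hq⟩, rfl⟩,
        p + J ((A ⟨q, hq⟩ : ↥L₀ᗮ) : H), add_mem hp (hmemJ' _ (A ⟨q, hq⟩).2), ?_⟩
      abel
  -- Part 3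
  have part3 : ∀ L : Submodule ℝ H, L.map (J : H →ₗ[ℝ] H) = Lᗮ → L ⊓ L₀ = ⊥ → L ⊔ L₀ = ⊤ →
      ∃ A : ↥L₀ᗮ →L[ℝ] ↥L₀ᗮ, IsSelfAdjoint A ∧ L = Gr A := by
    intro L hLlag hinf hsup
    have hLJ : ∀ x ∈ L, J x ∈ Lᗮ := by
      intro x hx
      rw [← hLlag]
      exact Submodule.mem_map_of_mem hx
    have hLJ' : ∀ x : H, J x ∈ Lᗮ → x ∈ L := by
      intro x hx
      rw [← hLlag] at hx
      obtain ⟨l, hl, he⟩ := hx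
      have he' : J (l - x) = 0 := by
        rw [map_sub, sub_eq_zero]; exact he
      have : l = x := by
        have := hJinj _ he'; rwa [sub_eq_zero] at this
      rwa [← this]
    have hLclosed : IsClosed (L : Set H) := by
      have : (L : Set H) = (⇑J) ⁻¹' (Lᗮ : Set H) := by
        ext x; exact ⟨fun h => hLJ x h, fun h => hLJ' x h⟩
      rw [this]
      exact L.isClosed_orthogonal.preimage J.continuous
    have hcompl : IsCompl L₀ L := by
      constructor
      · rw [disjoint_iff, inf_comm]; exact hinf
      · rw [codisjoint_iff, sup_comm]; exact hsup
    set π := L₀.linearProjOfClosedCompl L hcompl hL₀closed hLclosed with hπdef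
    have hπeq : ∀ x : H, π x = L₀.linearProjOfIsCompl L hcompl x := fun x =>
      congrFun (Submodule.coe_continuous_linearProjOfClosedCompl' hcompl hL₀closed hLclosed) x
    have hπL : ∀ x ∈ L, π x = 0 := fun x hx => by
      rw [hπeq]; exact Submodule.projectionOnto_apply_of_mem_right hcompl hx
    have hπL₀ : ∀ x : ↥L₀, π (x : H) = x := fun x => by
      rw [hπeq]; exact Submodule.linearProjOfIsCompl_apply_left hcompl x
    have hkey : ∀ x : H, x - ((π x : ↥L₀) : H) ∈ L := by
      intro x
      have h := Submodule.projection_add_projection_eq_self hcompl x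
      have h2 : ((L.linearProjOfIsCompl L₀ hcompl.symm x : ↥L) : H)
          = x - ((L₀.linearProjOfIsCompl L hcompl x : ↥L₀) : H) := eq_sub_iff_add_eq'.2 h
      rw [hπeq, ← h2]
      exact Submodule.coe_mem _
    let f : ↥L₀ᗮ →L[ℝ] H := (-J) ∘L (L₀.subtypeL ∘L (π ∘L L₀ᗮ.subtypeL))
    have hfmem : ∀ u : ↥L₀ᗮ, f u ∈ L₀ᗮ := by
      intro u
      show (-J) ((π ((u : H)) : ↥L₀) : H) ∈ L₀ᗮ
      have := hmemJ _ (π (u : H)).2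
      simpa using neg_mem this
    set A : ↥L₀ᗮ →L[ℝ] ↥L₀ᗮ := f.codRestrict L₀ᗮ hfmem with hAdef
    have hAcoe : ∀ u : ↥L₀ᗮ, ((A u : ↥L₀ᗮ) : H) = -(J ((π (u : H) : ↥L₀) : H)) :=
      fun u => rfl
    have hAsa : IsSelfAdjoint A := by
      rw [ContinuousLinearMap.isSelfAdjoint_iff_isSymmetric]
      intro u v
      have hl : (u : H) - ((π (u : H) : ↥L₀) : H) ∈ L := hkey u
      have hl' : (v : H) - ((π (v : H) : ↥L₀) : H) ∈ L := hkey v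
      have h0 : ⟪J ((u : H) - ((π (u : H) : ↥L₀) : H)),
          (v : H) - ((π (v : H) : ↥L₀) : H)⟫ = 0 := by
        rw [real_inner_comm]
        exact (Submodule.mem_orthogonal L _).1 (hLJ _ hl) _ hl'
      rw [map_sub, inner_sub_left, inner_sub_right, inner_sub_right] at h0
      have e1 : ⟪J (u : H), (v : H)⟫ = 0 := horto _ _ (hmemJ' _ u.2) v.2
      have e2 : ⟪J ((π (u : H) : ↥L₀) : H), ((π (v : H) : ↥L₀) : H)⟫ = 0 :=
        horto' _ _ (hmemJ _ (π (u : H)).2) (π (v : H)).2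
      have e3 := hJinner (u : H) ((π (v : H) : ↥L₀) : H)
      show (inner ℝ (A u) v : ℝ) = inner ℝ u (A v)
      rw [Submodule.coe_inner, Submodule.coe_inner, hAcoe, hAcoe,
        inner_neg_left, inner_neg_right]
      linarith [h0, e1, e2, e3]
    refine ⟨A, hAsa, ?_⟩
    ext x
    rw [hmemGr]
    constructor
    · intro hx
      obtain ⟨p, hp, q, hq, hxeq⟩ := hdecomp x
      refine ⟨⟨q, hq⟩, ?_⟩
      have hπq : ((π q : ↥L₀) : H) = -p := by
        have h1 : π x = 0 := hπL _ hx
        have h2 : π p = ⟨p, hp⟩ := hπL₀ ⟨p, hp⟩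
        have h3 : π q = π x - π p := by rw [hxeq, map_add]; abel
        rw [h3, h1, h2]
        simp
      rw [hAcoe]
      show q - J (-(J ((π q : ↥L₀) : H))) = x
      rw [hπq]
      simp only [map_neg, neg_neg, hJJ]
      rw [hxeq]
      abel
    · rintro ⟨u, rfl⟩
      have : (u : H) - J ((A u : ↥L₀ᗮ) : H) = (u : H) - ((π (u : H) : ↥L₀) : H) := by
        rw [hAcoe]
        simp only [map_neg, neg_neg, hJJ]
      rw [this]
      exact hkey (u : H)
  exact ⟨fun A B _ _ h => part1 A B h, part2, part3⟩
end
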